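/- Fix t ≥ 2 and r ≥ 2, and let E = E(s_1,...,s_r) as above. If s_j = 2 then H̃_i(E) ≅ H̃_{i-2}(E(s_1,...,s_{j-1},s_{j+1},...,s_r)) for all i, and if s_j = 1 then H̃_i(E) ≅ H̃_{i-1}(E(s_1,...,s_{j-1},s_{j+1},...,s_r)) for all i. -/

import Mathlib

open Finset

def SC.facesC (Δ : Set (Finset ℕ)) (c : ℤ) : Type :=
  {F : Finset ℕ // F ∈ Δ ∧ (F.card : ℤ) = c}

open Classical in
noncomputable def SC.bdry (K : Type) [Field K] (Δ : Set (Finset ℕ)) (a b : ℤ) :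
    (SC.facesC Δ a →₀ K) →ₗ[K] (SC.facesC Δ b →₀ K) :=
  Finsupp.lsum K fun F => LinearMap.toSpanSingleton K _
    (∑ x ∈ F.1, if h : F.1.erase x ∈ Δ ∧ (((F.1.erase x).card : ℤ) = b)
      then ((-1 : K) ^ (F.1.filter (fun y => y < x)).card) •
        Finsupp.single (⟨F.1.erase x, h⟩ : SC.facesC Δ b) (1 : K)
      else 0)

noncomputable def SC.hdim (K : Type) [Field K] (Δ : Set (Finset ℕ)) (i : ℤ) : ℕ :=
  Module.finrank K (LinearMap.ker (SC.bdry K Δ (i + 1) i)) -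
    Module.finrank K (LinearMap.range (SC.bdry K Δ (i + 2) (i + 1)))

def SC.gen (S : Set (Finset ℕ)) : Set (Finset ℕ) := {F | ∃ A ∈ S, F ⊆ A}

/-- The facet `F_a = {x_a, …, x_{a+t-1}}` (indices mod `n`, vertices `0, …, n-1`). -/
def cycForm (n t a : ℕ) : Finset ℕ := (Finset.range t).image (fun k => (a + k) % n)

/-- The facets of the path complex `Δ_t(C_n)` of the cycle. -/
def cycFacets (n t : ℕ) : Finset (Finset ℕ) := (Finset.range n).image (cycForm n t)

/-- The Stanley–Reisner complex on vertex set `{0,…,n-1}` of the squarefree monomial ideal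
whose minimal generators have supports `Gens`. -/
def SRcomplex (n : ℕ) (Gens : Finset (Finset ℕ)) : Set (Finset ℕ) :=
  {F | F ⊆ Finset.range n ∧ ¬ ∃ G ∈ Gens, G ⊆ F}

open Classical in
/-- The graded Betti number `β_{i,j}(R/I)` of the squarefree monomial ideal
`I ⊆ K[x_0,…,x_{n-1}]` with generator supports `Gens`, characterized by
Hochster's formula: `β_{i,j}(R/I) = Σ_{W, |W| = j} dim_K H̃_{j-i-1}((Δ_I)|_W; K)`. -/
noncomputable def betti (K : Type) [Field K] (n : ℕ) (Gens : Finset (Finset ℕ)) (i j : ℕ) : ℕ :=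
  ∑ W ∈ (Finset.range n).powersetCard j,
    SC.hdim K {F | F ∈ SRcomplex n Gens ∧ F ⊆ W} ((j : ℤ) - i - 1)

/-- Betti numbers of `R/I_t(C_n)`. -/
noncomputable def bettiCycle (K : Type) [Field K] (n t i j : ℕ) : ℕ :=
  betti K n (cycFacets n t) i j

/-- The facets of a run of length `s` (for path length `t`) starting at vertex `a`:
`F_i = {a+i, …, a+i+t-1}` for `0 ≤ i < s`. -/
def runFacets (t a s : ℕ) : Set (Finset ℕ) := {F | ∃ i < s, F = Finset.Ico (a + i) (a + i + t)}

/-- Facets of a disjoint union of runs of lengths `L`, laid out left to right starting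
at vertex `a`, with a gap between consecutive runs. -/
def runsFacets (t : ℕ) : ℕ → List ℕ → Set (Finset ℕ)
  | _, [] => ∅
  | a, s :: L => runFacets t a s ∪ runsFacets t (a + s + t) L

/-- Vertex set of the above disjoint union of runs (a run of length `s` has `s+t-1` vertices). -/
def runsVerts (t : ℕ) : ℕ → List ℕ → Finset ℕ
  | _, [] => ∅
  | a, s :: L => Finset.Ico a (a + s + t - 1) ∪ runsVerts t (a + s + t) L

/-- `E(s_1,…,s_r)`: the complex generated by the complements, within the total vertex set,
of the facets of a disjoint union of runs of lengths `s_1, …, s_r`. -/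
def EC (t : ℕ) (L : List ℕ) : Set (Finset ℕ) :=
  SC.gen {G | ∃ F ∈ runsFacets t 0 L, G = runsVerts t 0 L \ F}


namespace SRR
open SC

variable (K : Type) [Field K]

def sgn (x : ℕ) (F : Finset ℕ) : K := (-1 : K) ^ (F.filter (fun y => y < x)).card

lemma sgn_mul_self (x : ℕ) (F : Finset ℕ) : sgn K x F * sgn K x F = 1 := by
  rw [sgn, ← mul_pow]; norm_num

def closed (Δ : Set (Finset ℕ)) : Prop := ∀ F ∈ Δ, ∀ G ⊆ F, G ∈ Δ

open Classical in
noncomputable def term (Δ : Set (Finset ℕ)) (b : ℤ) (G : Finset ℕ) (coef : K) :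
    facesC Δ b →₀ K :=
  if h : G ∈ Δ ∧ ((G.card : ℤ) = b) then coef • Finsupp.single (⟨G, h⟩ : facesC Δ b) 1 else 0

open Classical in
lemma bdry_single (Δ : Set (Finset ℕ)) (a b : ℤ) (F : facesC Δ a) :
    SC.bdry K Δ a b (Finsupp.single F 1) = ∑ x ∈ F.1, term K Δ b (F.1.erase x) (sgn K x F.1) := by
  rw [SC.bdry, Finsupp.lsum_single, LinearMap.toSpanSingleton_apply, one_smul]
  refine Finset.sum_congr rfl fun x _ => ?_
  rw [term]
  rfl

end SRR

namespace SRR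
open SC
variable (K : Type) [Field K]

lemma term_smul (Δ : Set (Finset ℕ)) (b : ℤ) (G : Finset ℕ) (c k : K) :
    c • term K Δ b G k = term K Δ b G (c * k) := by
  rw [term, term]; split
  · erw [smul_smul]; rfl
  · rw [smul_zero]

lemma term_add (Δ : Set (Finset ℕ)) (b : ℤ) (G : Finset ℕ) (k l : K) :
    term K Δ b G k + term K Δ b G l = term K Δ b G (k + l) := by
  rw [term, term, term]; split
  · erw [add_smul]; rfl
  · rw [add_zero]

lemma term_zero (Δ : Set (Finset ℕ)) (b : ℤ) (G : Finset ℕ) :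
    term K Δ b G 0 = 0 := by
  rw [term]; split
  · erw [zero_smul]; rfl
  · rfl

lemma term_eq_single (Δ : Set (Finset ℕ)) (b : ℤ) (F : facesC Δ b) :
    term K Δ b F.1 1 = Finsupp.single F 1 := by
  obtain ⟨G, hG⟩ := F
  erw [term, dif_pos hG, one_smul]; rfl

lemma bdry_term (Δ : Set (Finset ℕ)) (b c : ℤ) (G : Finset ℕ) (k : K)
    (h : G ∈ Δ ∧ ((G.card : ℤ) = b)) :
    SC.bdry K Δ b c (term K Δ b G k) = k • ∑ y ∈ G, term K Δ c (G.erase y) (sgn K y G) := by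
  erw [term, dif_pos h, map_smul, bdry_single]

-- counting lemmas for signs
lemma sgn_erase_of_lt (x y : ℕ) (F : Finset ℕ) (hy : y ∈ F) (h : y < x) :
    sgn K x (F.erase y) = - sgn K x F := by
  have h1 : (F.erase y).filter (fun z => z < x) = (F.filter (fun z => z < x)).erase y := by
    ext z; simp only [mem_filter, mem_erase]; tauto
  have hy' : y ∈ F.filter (fun z => z < x) := mem_filter.mpr ⟨hy, h⟩
  have hc : 1 ≤ (F.filter (fun z => z < x)).card := card_pos.mpr ⟨y, hy'⟩
  rw [sgn, sgn, h1, card_erase_of_mem hy']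
  obtain ⟨m, hm⟩ : ∃ m, (F.filter (fun z => z < x)).card = m + 1 :=
    ⟨(F.filter (fun z => z < x)).card - 1, by omega⟩
  rw [hm]
  simp [pow_succ]

lemma sgn_erase_of_gt (x y : ℕ) (F : Finset ℕ) (h : x ≤ y) :
    sgn K x (F.erase y) = sgn K x F := by
  have h1 : (F.erase y).filter (fun z => z < x) = F.filter (fun z => z < x) := by
    ext z; simp only [mem_filter, mem_erase]
    constructor
    · tauto
    · rintro ⟨hz, hzx⟩; exact ⟨⟨by omega, hz⟩, hzx⟩
  rw [sgn, sgn, h1]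

/-- The fundamental sign identity. -/
lemma sgn_anticomm (x y : ℕ) (F : Finset ℕ) (hx : x ∈ F) (hy : y ∈ F) (hxy : x ≠ y) :
    sgn K y F * sgn K x (F.erase y) = -(sgn K x F * sgn K y (F.erase x)) := by
  rcases lt_or_gt_of_ne hxy with h | h
  · rw [sgn_erase_of_gt K x y F (le_of_lt h), sgn_erase_of_lt K y x F hx h]
    ring
  · rw [sgn_erase_of_lt K x y F hy h, sgn_erase_of_gt K y x F (le_of_lt h)]
    ring

/-- `∂ ∘ ∂ = 0` on a subset-closed complex. -/
lemma bdry_bdry (Δ : Set (Finset ℕ)) (hΔ : closed Δ) (a b c : ℤ)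
    (hb : b = a - 1) (hc : c = b - 1) :
    (SC.bdry K Δ b c) ∘ₗ (SC.bdry K Δ a b) = 0 := by
  refine Finsupp.lhom_ext fun F k => ?_
  have hk : (Finsupp.single F k : facesC Δ a →₀ K) = k • Finsupp.single F 1 := by
    rw [Finsupp.smul_single, smul_eq_mul, mul_one]
  rw [LinearMap.comp_apply, hk, map_smul, map_smul, bdry_single, map_sum]
  have hterm : ∀ x ∈ F.1, SC.bdry K Δ b c (term K Δ b (F.1.erase x) (sgn K x F.1)) =
      ∑ y ∈ F.1.erase x, term K Δ c ((F.1.erase x).erase y) (sgn K x F.1 * sgn K y (F.1.erase x)) := by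
    intro x hx
    have hmem : F.1.erase x ∈ Δ := hΔ F.1 F.2.1 _ (erase_subset x F.1)
    have hcard : ((F.1.erase x).card : ℤ) = b := by
      have h1 : 1 ≤ F.1.card := card_pos.mpr ⟨x, hx⟩
      rw [card_erase_of_mem hx, hb, Nat.cast_sub h1, F.2.2, Nat.cast_one]
    rw [bdry_term K Δ b c _ _ ⟨hmem, hcard⟩, Finset.smul_sum]
    exact Finset.sum_congr rfl fun y _ => term_smul K Δ c _ _ _
  rw [Finset.sum_congr rfl hterm, Finset.sum_sigma' F.1 (fun x => F.1.erase x)]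
  have : ∑ p ∈ F.1.sigma (fun x => F.1.erase x),
      term K Δ c ((F.1.erase p.1).erase p.2) (sgn K p.1 F.1 * sgn K p.2 (F.1.erase p.1)) = 0 := by
    have heec : ∀ (G : Finset ℕ) (u v : ℕ), (G.erase u).erase v = (G.erase v).erase u := by
      intro G u v; ext z; simp only [mem_erase]; tauto
    refine Finset.sum_involution (fun p _ => ⟨p.2, p.1⟩) ?_ ?_ ?_ ?_
    · rintro ⟨x, y⟩ hp
      dsimp only
      simp only [Finset.mem_sigma, Finset.mem_erase] at hp
      obtain ⟨hx, hyx, hy⟩ := hp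
      have hxy : (x : ℕ) ≠ y := fun h => hyx h.symm
      rw [heec (F.1) x y, term_add]
      rw [show sgn K x F.1 * sgn K y (F.1.erase x) + sgn K y F.1 * sgn K x (F.1.erase y) = 0 by
        rw [sgn_anticomm K x y F.1 hx hy hxy]; ring]
      exact term_zero K Δ c _
    · rintro ⟨x, y⟩ hp _
      simp only [Finset.mem_sigma, Finset.mem_erase] at hp
      exact fun h => hp.2.1 (congrArg Sigma.fst h)
    · rintro ⟨x, y⟩ hp
      simp only [Finset.mem_sigma, Finset.mem_erase] at hp ⊢
      exact ⟨hp.2.2, fun h => hp.2.1 h.symm, hp.1⟩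
    · rintro ⟨x, y⟩ _; rfl
  rw [this, smul_zero, LinearMap.zero_apply]

open Classical in
noncomputable def hmap (Δ : Set (Finset ℕ)) (v : ℕ) (a b : ℤ) :
    (facesC Δ a →₀ K) →ₗ[K] (facesC Δ b →₀ K) :=
  Finsupp.lsum K fun F => LinearMap.toSpanSingleton K _
    (if v ∈ F.1 then 0 else term K Δ b (insert v F.1) (sgn K v (insert v F.1)))

open Classical in
lemma hmap_single (Δ : Set (Finset ℕ)) (v : ℕ) (a b : ℤ) (F : facesC Δ a) :
    hmap K Δ v a b (Finsupp.single F 1) =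
      if v ∈ F.1 then 0 else term K Δ b (insert v F.1) (sgn K v (insert v F.1)) := by
  rw [hmap, Finsupp.lsum_single, LinearMap.toSpanSingleton_apply, one_smul]

open Classical in
lemma hmap_term (Δ : Set (Finset ℕ)) (v : ℕ) (a b : ℤ) (G : Finset ℕ) (k : K)
    (h : G ∈ Δ ∧ ((G.card : ℤ) = a)) :
    hmap K Δ v a b (term K Δ a G k) =
      if v ∈ G then 0 else term K Δ b (insert v G) (k * sgn K v (insert v G)) := by
  erw [term, dif_pos h, map_smul, hmap_single]
  split
  · rw [smul_zero]
  · rw [term_smul]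

lemma insert_erase_comm' (v x : ℕ) (F : Finset ℕ) (hxv : x ≠ v) :
    insert v (F.erase x) = (insert v F).erase x := by
  ext z; simp only [Finset.mem_insert, Finset.mem_erase]
  constructor
  · rintro (rfl | ⟨h1, h2⟩)
    · exact ⟨fun h => hxv h.symm, Or.inl rfl⟩
    · exact ⟨h1, Or.inr h2⟩
  · rintro ⟨h1, rfl | h2⟩
    · exact Or.inl rfl
    · exact Or.inr ⟨h1, h2⟩

lemma sgn_cone (v x : ℕ) (F : Finset ℕ) (hv : v ∉ F) (hx : x ∈ F) :
    sgn K v (insert v F) * sgn K x (insert v F) +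
      sgn K x F * sgn K v ((insert v F).erase x) = 0 := by
  have hxv : x ≠ v := fun h => hv (h ▸ hx)
  have h' := sgn_anticomm K x v (insert v F) (mem_insert_of_mem hx) (mem_insert_self v F) hxv
  rw [erase_insert hv] at h'
  have hB := sgn_mul_self K x (insert v F)
  have hC := sgn_mul_self K x F
  linear_combination (sgn K x (insert v F) * sgn K x F) * h'
    - sgn K x F * sgn K v ((insert v F).erase x) * hB
    - sgn K v (insert v F) * sgn K x (insert v F) * hC

/-- the cone contracting homotopy identity -/
lemma cone_homotopy (Δ : Set (Finset ℕ)) (hΔ : closed Δ) (v : ℕ)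
    (hv : ∀ F ∈ Δ, insert v F ∈ Δ) (a : ℤ) :
    (SC.bdry K Δ (a + 1) a) ∘ₗ (hmap K Δ v a (a + 1)) +
      (hmap K Δ v (a - 1) a) ∘ₗ (SC.bdry K Δ a (a - 1)) = LinearMap.id := by
  classical
  refine Finsupp.lhom_ext fun F k => ?_
  have hk : (Finsupp.single F k : facesC Δ a →₀ K) = k • Finsupp.single F 1 := by
    rw [Finsupp.smul_single, smul_eq_mul, mul_one]
  suffices h : SC.bdry K Δ (a+1) a (hmap K Δ v a (a+1) (Finsupp.single F 1)) +
      hmap K Δ v (a-1) a (SC.bdry K Δ a (a-1) (Finsupp.single F 1)) = Finsupp.single F 1 by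
    rw [LinearMap.add_apply, LinearMap.comp_apply, LinearMap.comp_apply, hk, map_smul, map_smul,
      map_smul, map_smul, ← smul_add, h, LinearMap.id_apply]
  have hcard1 : ∀ x ∈ F.1, ((F.1.erase x).card : ℤ) = a - 1 := by
    intro x hx
    have h1 : 1 ≤ F.1.card := card_pos.mpr ⟨x, hx⟩
    rw [card_erase_of_mem hx, Nat.cast_sub h1, F.2.2, Nat.cast_one]
  rw [hmap_single, bdry_single, map_sum]
  by_cases hvF : v ∈ F.1
  · rw [if_pos hvF, map_zero, zero_add]
    have hterm : ∀ x ∈ F.1, hmap K Δ v (a-1) a (term K Δ (a-1) (F.1.erase x) (sgn K x F.1)) =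
        if x = v then Finsupp.single F 1 else 0 := by
      intro x hx
      have hmem : F.1.erase x ∈ Δ := hΔ F.1 F.2.1 _ (erase_subset x F.1)
      rw [hmap_term K Δ v (a-1) a _ _ ⟨hmem, hcard1 x hx⟩]
      by_cases hxv : x = v
      · subst hxv
        rw [if_neg (notMem_erase x F.1), insert_erase hx, if_pos rfl, sgn_mul_self,
          term_eq_single]
      · rw [if_pos (mem_erase.mpr ⟨fun h => hxv h.symm, hvF⟩), if_neg hxv]
    rw [Finset.sum_congr rfl hterm,
      Finset.sum_eq_single_of_mem v hvF (fun x _ hne => by rw [if_neg hne]), if_pos rfl]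
  · rw [if_neg hvF]
    have hins : insert v F.1 ∈ Δ := hv F.1 F.2.1
    have hinscard : (((insert v F.1).card : ℕ) : ℤ) = a + 1 := by
      rw [card_insert_of_notMem hvF, Nat.cast_add, F.2.2, Nat.cast_one]
    rw [bdry_term K Δ (a+1) a _ _ ⟨hins, hinscard⟩, Finset.sum_insert hvF, smul_add,
      term_smul, sgn_mul_self, erase_insert hvF, term_eq_single, Finset.smul_sum]
    have hterm2 : ∀ x ∈ F.1,
        hmap K Δ v (a-1) a (term K Δ (a-1) (F.1.erase x) (sgn K x F.1)) =
          term K Δ a ((insert v F.1).erase x)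
            (sgn K x F.1 * sgn K v ((insert v F.1).erase x)) := by
      intro x hx
      have hmem : F.1.erase x ∈ Δ := hΔ F.1 F.2.1 _ (erase_subset x F.1)
      have hxv : x ≠ v := fun h => hvF (h ▸ hx)
      rw [hmap_term K Δ v (a-1) a _ _ ⟨hmem, hcard1 x hx⟩,
        if_neg (fun hc => hvF (mem_of_mem_erase hc)), insert_erase_comm' v x F.1 hxv]
    rw [Finset.sum_congr rfl hterm2, add_assoc, ← Finset.sum_add_distrib]
    have : ∀ x ∈ F.1, sgn K v (insert v F.1) • term K Δ a ((insert v F.1).erase x)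
          (sgn K x (insert v F.1)) +
        term K Δ a ((insert v F.1).erase x)
          (sgn K x F.1 * sgn K v ((insert v F.1).erase x)) = 0 := by
      intro x hx
      rw [term_smul, term_add, sgn_cone K v x F.1 hvF hx, term_zero]
    rw [Finset.sum_congr rfl this, Finset.sum_const_zero, add_zero]

/-- chains of a cone are exact -/
lemma cone_exact (Δ : Set (Finset ℕ)) (hΔ : closed Δ) (v : ℕ)
    (hv : ∀ F ∈ Δ, insert v F ∈ Δ) (a b c : ℤ) (hab : a = b + 1) (hbc : c = b - 1) :
    LinearMap.ker (SC.bdry K Δ b c) = LinearMap.range (SC.bdry K Δ a b) := by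
  subst hab hbc
  ext z
  constructor
  · intro hz
    have := LinearMap.congr_fun (cone_homotopy K Δ hΔ v hv b) z
    simp only [LinearMap.add_apply, LinearMap.comp_apply, LinearMap.id_apply] at this
    rw [LinearMap.mem_ker.mp hz, map_zero, add_zero] at this
    exact ⟨hmap K Δ v b (b+1) z, this⟩
  · rintro ⟨w, rfl⟩
    have := LinearMap.congr_fun (bdry_bdry K Δ hΔ (b+1) b (b-1) (by ring) rfl) w
    simp only [LinearMap.comp_apply, LinearMap.zero_apply] at this
    exact LinearMap.mem_ker.mpr this

/-- inclusion of chain groups along an inclusion of complexes -/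
noncomputable def incl (Δ₁ Δ₂ : Set (Finset ℕ)) (h : Δ₁ ⊆ Δ₂) (c : ℤ) :
    (facesC Δ₁ c →₀ K) →ₗ[K] (facesC Δ₂ c →₀ K) :=
  Finsupp.lmapDomain K K (fun F => (⟨F.1, h F.2.1, F.2.2⟩ : facesC Δ₂ c))

lemma incl_injective (Δ₁ Δ₂ : Set (Finset ℕ)) (h : Δ₁ ⊆ Δ₂) (c : ℤ) :
    Function.Injective (incl K Δ₁ Δ₂ h c) :=
  Finsupp.mapDomain_injective (fun F G hFG => by
    apply Subtype.ext
    exact Subtype.mk_eq_mk.mp hFG)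

lemma incl_single (Δ₁ Δ₂ : Set (Finset ℕ)) (h : Δ₁ ⊆ Δ₂) (c : ℤ) (F : facesC Δ₁ c) (k : K) :
    incl K Δ₁ Δ₂ h c (Finsupp.single F k) =
      Finsupp.single (⟨F.1, h F.2.1, F.2.2⟩ : facesC Δ₂ c) k := by
  erw [incl, Finsupp.lmapDomain_apply, Finsupp.mapDomain_single]; rfl

lemma incl_term (Δ₁ Δ₂ : Set (Finset ℕ)) (h : Δ₁ ⊆ Δ₂) (b : ℤ) (G : Finset ℕ) (k : K)
    (hG : G ∈ Δ₁ ∧ ((G.card : ℤ) = b)) :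
    incl K Δ₁ Δ₂ h b (term K Δ₁ b G k) = term K Δ₂ b G k := by
  erw [term, dif_pos hG, map_smul, incl_single, term, dif_pos ⟨h hG.1, hG.2⟩]; rfl

/-- inclusions are chain maps -/
lemma incl_comm (Δ₁ Δ₂ : Set (Finset ℕ)) (h : Δ₁ ⊆ Δ₂) (h₁ : closed Δ₁) (a b : ℤ)
    (hb : b = a - 1) :
    (incl K Δ₁ Δ₂ h b) ∘ₗ (SC.bdry K Δ₁ a b) = (SC.bdry K Δ₂ a b) ∘ₗ (incl K Δ₁ Δ₂ h a) := by
  refine Finsupp.lhom_ext fun F k => ?_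
  have hk : (Finsupp.single F k : facesC Δ₁ a →₀ K) = k • Finsupp.single F 1 := by
    rw [Finsupp.smul_single, smul_eq_mul, mul_one]
  rw [LinearMap.comp_apply, LinearMap.comp_apply, hk, map_smul, map_smul, map_smul, map_smul]
  congr 1
  erw [bdry_single, incl_single, bdry_single, map_sum]
  refine Finset.sum_congr rfl fun x hx => ?_
  have hmem : F.1.erase x ∈ Δ₁ := h₁ F.1 F.2.1 _ (erase_subset x F.1)
  have hcard : ((F.1.erase x).card : ℤ) = b := by
    have h1 : 1 ≤ F.1.card := card_pos.mpr ⟨x, hx⟩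
    rw [card_erase_of_mem hx, hb, Nat.cast_sub h1, F.2.2, Nat.cast_one]
  exact incl_term K Δ₁ Δ₂ h b _ _ ⟨hmem, hcard⟩

/-- faces of a complex with bounded vertex set form a finite type -/
lemma finite_facesC (Δ : Set (Finset ℕ)) (N : ℕ) (hfin : ∀ F ∈ Δ, F ⊆ Finset.range N) (c : ℤ) :
    Finite (facesC Δ c) := by
  refine Finite.of_injective
    (fun F => (⟨F.1, Finset.mem_powerset.mpr (hfin F.1 F.2.1)⟩ : ((Finset.range N).powerset : Finset (Finset ℕ))))
    ?_
  intro F G hFG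
  apply Subtype.ext
  dsimp only at hFG
  exact Subtype.mk_eq_mk.mp hFG

lemma fd_finsupp (α : Type) [Finite α] : Module.Finite K (α →₀ K) := by
  cases nonempty_fintype α
  exact Module.Finite.equiv (Finsupp.linearEquivFunOnFinite K K α).symm

section Connect
open Module LinearMap

variable {A2 A1 A0 B3 B2 B1 B0 C3 C2 C1 : Type}
  [AddCommGroup A2] [AddCommGroup A1] [AddCommGroup A0]
  [AddCommGroup B3] [AddCommGroup B2] [AddCommGroup B1] [AddCommGroup B0]
  [AddCommGroup C3] [AddCommGroup C2] [AddCommGroup C1]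
  [Module K A2] [Module K A1] [Module K A0]
  [Module K B3] [Module K B2] [Module K B1] [Module K B0]
  [Module K C3] [Module K C2] [Module K C1]

/-- dimension form of the Mayer–Vietoris connecting isomorphism -/
lemma connect_dim
    [FiniteDimensional K A2] [FiniteDimensional K B2] [FiniteDimensional K B3]
    (dA2 : A2 →ₗ[K] A1) (dA1 : A1 →ₗ[K] A0)
    (dB3 : B3 →ₗ[K] B2) (dB2 : B2 →ₗ[K] B1) (dB1 : B1 →ₗ[K] B0)
    (dC3 : C3 →ₗ[K] C2) (dC2 : C2 →ₗ[K] C1)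
    (f2 : A2 →ₗ[K] B2) (f1 : A1 →ₗ[K] B1) (f0 : A0 →ₗ[K] B0)
    (g3 : B3 →ₗ[K] C3) (g2 : B2 →ₗ[K] C2) (g1 : B1 →ₗ[K] C1)
    (hf2 : Function.Injective f2) (hf1 : Function.Injective f1) (hf0 : Function.Injective f0)
    (hg2 : Function.Surjective g2) (hg3 : Function.Surjective g3)
    (hex1 : ker g1 = range f1) (hex2 : ker g2 = range f2)
    (hcf2 : dB2 ∘ₗ f2 = f1 ∘ₗ dA2) (hcf1 : dB1 ∘ₗ f1 = f0 ∘ₗ dA1)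
    (hcg2 : dC2 ∘ₗ g2 = g1 ∘ₗ dB2) (hcg3 : dC3 ∘ₗ g3 = g2 ∘ₗ dB3)
    (hB2 : ker dB2 = range dB3) (hB1 : ker dB1 = range dB2)
    (hBB : dB1 ∘ₗ dB2 = 0) :
    finrank K (ker dC2) + finrank K (range dA2) =
      finrank K (ker dA1) + finrank K (range dC3) := by
  classical
  set S : Submodule K B2 := ker (g1 ∘ₗ dB2) with hS
  have hmemS : ∀ b : B2, b ∈ S ↔ g1 (dB2 b) = 0 := fun b => Iff.rfl
  -- p : S → C2
  set p : ↥S →ₗ[K] C2 := g2 ∘ₗ S.subtype with hp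
  have hrangep : range p = ker dC2 := by
    ext c
    constructor
    · rintro ⟨⟨b, hb⟩, rfl⟩
      simp only [hp, comp_apply, Submodule.subtype_apply, mem_ker]
      have : dC2 (g2 b) = g1 (dB2 b) := congr_fun (congrArg DFunLike.coe hcg2) b
      rw [this]
      exact hb
    · intro hc
      obtain ⟨b, rfl⟩ := hg2 c
      have hbS : b ∈ S := by
        rw [hmemS]
        have : dC2 (g2 b) = g1 (dB2 b) := congr_fun (congrArg DFunLike.coe hcg2) b
        rw [← this]
        exact hc
      exact ⟨⟨b, hbS⟩, rfl⟩
  -- ker p ≃ A2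
  have hf2S : ∀ a : A2, f2 a ∈ S := by
    intro a
    rw [hmemS]
    have h1 : dB2 (f2 a) = f1 (dA2 a) := congr_fun (congrArg DFunLike.coe hcf2) a
    rw [h1]
    have : f1 (dA2 a) ∈ range f1 := ⟨dA2 a, rfl⟩
    rw [← hex1] at this
    exact this
  have hkerp : ∀ a : A2, p ⟨f2 a, hf2S a⟩ = 0 := by
    intro a
    have : f2 a ∈ range f2 := ⟨a, rfl⟩
    rw [← hex2] at this
    exact this
  set φ : A2 →ₗ[K] ↥(ker p) :=
    LinearMap.codRestrict (ker p) ((f2.codRestrict S hf2S)) (fun a => hkerp a) with hφ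
  have hφbij : Function.Bijective φ := by
    constructor
    · intro a a' haa'
      have : f2 a = f2 a' := by
        have := congrArg (fun x => ((x : ↥(ker p)) : ↥S).1 ) haa'
        exact this
      exact hf2 this
    · rintro ⟨⟨b, hbS⟩, hbker⟩
      have : b ∈ ker g2 := by
        have : g2 b = 0 := hbker
        exact this
      rw [hex2] at this
      obtain ⟨a, rfl⟩ := this
      exact ⟨a, rfl⟩
  have hfact1 : finrank K ↥S = finrank K (ker dC2) + finrank K A2 := by
    have h1 := LinearMap.finrank_range_add_finrank_ker p
    rw [hrangep] at h1
    rw [← h1, (LinearEquiv.ofBijective φ hφbij).finrank_eq.symm]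
  -- q : S → B1
  set q : ↥S →ₗ[K] B1 := dB2 ∘ₗ S.subtype with hq
  have hrangeq : range q = Submodule.map f1 (ker dA1) := by
    ext w
    constructor
    · rintro ⟨⟨b, hbS⟩, rfl⟩
      have hbk : dB2 b ∈ ker g1 := hbS
      rw [hex1] at hbk
      obtain ⟨a, ha⟩ := hbk
      refine ⟨a, ?_, ha⟩
      have h1 : f0 (dA1 a) = dB1 (f1 a) := (congr_fun (congrArg DFunLike.coe hcf1) a).symm
      have h2 : dB1 (dB2 b) = 0 := by
        have := LinearMap.congr_fun hBB b
        simpa using this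
      rw [ha] at h1
      rw [h2] at h1
      exact hf0 (by rw [map_zero]; exact h1)
    · rintro ⟨a, ha, rfl⟩
      have h1 : dB1 (f1 a) = f0 (dA1 a) := congr_fun (congrArg DFunLike.coe hcf1) a
      rw [mem_ker.mp ha, map_zero] at h1
      have : f1 a ∈ ker dB1 := h1
      rw [hB1] at this
      obtain ⟨b, hb⟩ := this
      have hbS : b ∈ S := by
        rw [hmemS, hb]
        have : f1 a ∈ range f1 := ⟨a, rfl⟩
        rw [← hex1] at this
        exact this
      exact ⟨⟨b, hbS⟩, hb⟩
  have hkerq : ∀ x : ↥(ker q), (x : ↥S).1 ∈ range dB3 := by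
    rintro ⟨⟨b, hbS⟩, hbk⟩
    have : dB2 b = 0 := hbk
    rw [← hB2]
    exact this
  set ψ : ↥(ker q) →ₗ[K] ↥(range dB3) :=
    LinearMap.codRestrict (range dB3) (S.subtype ∘ₗ (ker q).subtype) hkerq with hψ
  have hψbij : Function.Bijective ψ := by
    constructor
    · intro x y hxy
      apply Subtype.ext; apply Subtype.ext
      exact Subtype.mk_eq_mk.mp hxy
    · rintro ⟨u, hu⟩
      have hu2 : dB2 u = 0 := by rw [← mem_ker, hB2]; exact hu
      have huS : u ∈ S := by rw [hmemS, hu2, map_zero]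
      refine ⟨⟨⟨u, huS⟩, ?_⟩, rfl⟩
      exact hu2
  have hfact2 : finrank K ↥S = finrank K (ker dA1) + finrank K (range dB3) := by
    have h1 := LinearMap.finrank_range_add_finrank_ker q
    rw [hrangeq] at h1
    rw [← h1, (LinearEquiv.ofBijective ψ hψbij).finrank_eq,
      (Submodule.equivMapOfInjective f1 hf1 (ker dA1)).finrank_eq.symm]
  -- r : range dB3 → C2
  set r : ↥(range dB3) →ₗ[K] C2 := g2 ∘ₗ (range dB3).subtype with hr
  have hranger : range r = range dC3 := by
    ext c
    constructor
    · rintro ⟨⟨u, hu⟩, rfl⟩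
      obtain ⟨b3, rfl⟩ := hu
      refine ⟨g3 b3, ?_⟩
      exact congr_fun (congrArg DFunLike.coe hcg3) b3
    · rintro ⟨c3, rfl⟩
      obtain ⟨b3, rfl⟩ := hg3 c3
      refine ⟨⟨dB3 b3, ⟨b3, rfl⟩⟩, ?_⟩
      exact (congr_fun (congrArg DFunLike.coe hcg3) b3).symm
  have hmemkerr : ∀ a : ↥(ker dA2), f2 a.1 ∈ range dB3 := by
    intro a
    rw [← hB2, mem_ker]
    have h1 : dB2 (f2 a.1) = f1 (dA2 a.1) := congr_fun (congrArg DFunLike.coe hcf2) a.1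
    rw [h1, mem_ker.mp a.2, map_zero]
  set χ0 : ↥(ker dA2) →ₗ[K] ↥(range dB3) :=
    LinearMap.codRestrict (range dB3) (f2 ∘ₗ (ker dA2).subtype) hmemkerr with hχ0
  have hχ0ker : ∀ a : ↥(ker dA2), χ0 a ∈ ker r := by
    intro a
    have : g2 (f2 a.1) = 0 := by
      have : f2 a.1 ∈ range f2 := ⟨a.1, rfl⟩
      rw [← hex2] at this
      exact this
    exact this
  set χ : ↥(ker dA2) →ₗ[K] ↥(ker r) := LinearMap.codRestrict (ker r) χ0 hχ0ker with hχ
  have hχbij : Function.Bijective χ := by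
    constructor
    · intro a a' haa'
      apply Subtype.ext
      have h1 : f2 a.1 = f2 a'.1 := Subtype.mk_eq_mk.mp (Subtype.mk_eq_mk.mp haa')
      exact hf2 h1
    · rintro ⟨⟨u, hu⟩, hukerr⟩
      have hg2u : g2 u = 0 := hukerr
      have : u ∈ ker g2 := hg2u
      rw [hex2] at this
      obtain ⟨a, rfl⟩ := this
      have hu2 : dB2 (f2 a) = 0 := by rw [← mem_ker, hB2]; exact hu
      have hda : dA2 a = 0 := by
        apply hf1
        rw [map_zero, ← hu2]
        exact (congr_fun (congrArg DFunLike.coe hcf2) a).symm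
      exact ⟨⟨a, hda⟩, by apply Subtype.ext; apply Subtype.ext; rfl⟩
  have hfact3 : finrank K (range dB3) = finrank K (range dC3) + finrank K (ker dA2) := by
    have h1 := LinearMap.finrank_range_add_finrank_ker r
    rw [hranger] at h1
    rw [← h1, (LinearEquiv.ofBijective χ hχbij).finrank_eq]
  have hfact4 : finrank K (range dA2) + finrank K (ker dA2) = finrank K A2 :=
    LinearMap.finrank_range_add_finrank_ker dA2
  omega

end Connect

section MV
open Module LinearMap

variable (SS GG : Set (Finset ℕ))

/-- left map of the Mayer-Vietoris sequence -/
noncomputable def fmap (c : ℤ) :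
    (facesC (SS ∩ GG) c →₀ K) →ₗ[K] (facesC SS c →₀ K) × (facesC GG c →₀ K) :=
  (incl K _ _ (Set.inter_subset_left) c).prod (-(incl K _ _ (Set.inter_subset_right) c))

/-- right map of the Mayer-Vietoris sequence -/
noncomputable def gmap (c : ℤ) :
    ((facesC SS c →₀ K) × (facesC GG c →₀ K)) →ₗ[K] (facesC (SS ∪ GG) c →₀ K) :=
  (incl K _ _ (Set.subset_union_left) c).coprod (incl K _ _ (Set.subset_union_right) c)

lemma fmap_injective (c : ℤ) : Function.Injective (fmap K SS GG c) := by
  intro x y hxy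
  have h1 : incl K _ _ (Set.inter_subset_left) c x = incl K _ _ (Set.inter_subset_left) c y :=
    congrArg Prod.fst hxy
  exact incl_injective K _ _ _ c h1

lemma gmap_surjective (c : ℤ) : Function.Surjective (gmap K SS GG c) := by
  intro w
  induction w using Finsupp.induction with
  | zero => exact ⟨0, map_zero _⟩
  | single_add F k w _ _ ih =>
    obtain ⟨u, hu⟩ := ih
    rcases F.2.1 with hF | hF
    · refine ⟨((Finsupp.single (⟨F.1, hF, F.2.2⟩ : facesC SS c) k, 0) : (facesC SS c →₀ K) × (facesC GG c →₀ K)) + u, ?_⟩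
      erw [map_add, hu, gmap, LinearMap.coprod_apply, map_zero, add_zero, incl_single]
      congr 1
    · refine ⟨((0, Finsupp.single (⟨F.1, hF, F.2.2⟩ : facesC GG c) k) : (facesC SS c →₀ K) × (facesC GG c →₀ K)) + u, ?_⟩
      erw [map_add, hu, gmap, LinearMap.coprod_apply, map_zero, zero_add, incl_single]
      congr 1

lemma incl_trans (Δ₁ Δ₂ Δ₃ : Set (Finset ℕ)) (h12 : Δ₁ ⊆ Δ₂) (h23 : Δ₂ ⊆ Δ₃) (c : ℤ) :
    (incl K Δ₂ Δ₃ h23 c) ∘ₗ (incl K Δ₁ Δ₂ h12 c) = incl K Δ₁ Δ₃ (h12.trans h23) c := by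
  refine Finsupp.lhom_ext fun F k => ?_
  erw [LinearMap.comp_apply, incl_single, incl_single, incl_single]

lemma incl_apply_mem (Δ₁ Δ₂ : Set (Finset ℕ)) (h : Δ₁ ⊆ Δ₂) (c : ℤ)
    (u : facesC Δ₁ c →₀ K) (F : facesC Δ₁ c) :
    (incl K Δ₁ Δ₂ h c u) ⟨F.1, h F.2.1, F.2.2⟩ = u F := by
  have hj : Function.Injective
      (fun F : facesC Δ₁ c => (⟨F.1, h F.2.1, F.2.2⟩ : facesC Δ₂ c)) :=
    fun F G hFG => Subtype.ext (Subtype.mk_eq_mk.mp hFG)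
  exact Finsupp.mapDomain_apply hj u F

lemma incl_apply_notmem (Δ₁ Δ₂ : Set (Finset ℕ)) (h : Δ₁ ⊆ Δ₂) (c : ℤ)
    (u : facesC Δ₁ c →₀ K) (G : facesC Δ₂ c) (hG : G.1 ∉ Δ₁) :
    (incl K Δ₁ Δ₂ h c u) G = 0 := by
  have hj : Function.Injective
      (fun F : facesC Δ₁ c => (⟨F.1, h F.2.1, F.2.2⟩ : facesC Δ₂ c)) :=
    fun F G hFG => Subtype.ext (Subtype.mk_eq_mk.mp hFG)
  have h1 := Finsupp.embDomain_notin_range ⟨_, hj⟩ u G (by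
    rintro ⟨F, hF⟩
    exact hG (by
      rw [← show ((⟨_, hj⟩ : facesC Δ₁ c ↪ facesC Δ₂ c) F).1 = G.1 from congrArg Subtype.val hF]
      exact F.2.1))
  rw [Finsupp.embDomain_eq_mapDomain] at h1
  exact h1

lemma mv_exact (c : ℤ) : ker (gmap K SS GG c) = range (fmap K SS GG c) := by
  classical
  have hjASinj : Function.Injective
      (fun F : facesC (SS ∩ GG) c => (⟨F.1, F.2.1.1, F.2.2⟩ : facesC SS c)) :=
    fun F G h => Subtype.ext (Subtype.mk_eq_mk.mp h)
  ext z
  constructor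
  · -- ker ⊆ range
    obtain ⟨u, v⟩ := z
    intro hz
    have h : incl K _ _ (Set.subset_union_left) c u
        + incl K _ _ (Set.subset_union_right) c v = 0 := hz
    have hcoord : ∀ G : facesC (SS ∪ GG) c,
        (incl K _ _ (Set.subset_union_left) c u) G
          + (incl K _ _ (Set.subset_union_right) c v) G = 0 := by
      intro G
      have := DFunLike.congr_fun h G
      simpa using this
    have huout : ∀ G : facesC SS c, G.1 ∉ GG → u G = 0 := by
      intro G hG
      have h1 := hcoord ⟨G.1, Set.mem_union_left _ G.2.1, G.2.2⟩
      erw [incl_apply_mem, incl_apply_notmem K GG (SS ∪ GG) _ c v ⟨G.1, Set.mem_union_left _ G.2.1, G.2.2⟩ hG, add_zero] at h1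
      exact h1
    set x : facesC (SS ∩ GG) c →₀ K :=
      Finsupp.comapDomain _ u (hjASinj.injOn) with hx
    refine ⟨x, ?_⟩
    have hxapp : ∀ F : facesC (SS ∩ GG) c, x F = u ⟨F.1, F.2.1.1, F.2.2⟩ := fun F => rfl
    apply Prod.ext
    · show incl K _ _ (Set.inter_subset_left) c x = u
      ext G
      by_cases hG : G.1 ∈ GG
      · have hGeq : G = (⟨(⟨G.1, ⟨G.2.1, hG⟩, G.2.2⟩ : facesC (SS ∩ GG) c).1,
            Set.inter_subset_left (⟨G.1, ⟨G.2.1, hG⟩, G.2.2⟩ : facesC (SS ∩ GG) c).2.1,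
            (⟨G.1, ⟨G.2.1, hG⟩, G.2.2⟩ : facesC (SS ∩ GG) c).2.2⟩ : facesC SS c) :=
          Subtype.ext rfl
        erw [hGeq, incl_apply_mem, hxapp]
      · rw [incl_apply_notmem K _ _ _ c x G (fun hc => hG hc.2), huout G hG]
    · show -(incl K _ _ (Set.inter_subset_right) c x) = v
      ext H
      rw [Finsupp.neg_apply]
      by_cases hH : H.1 ∈ SS
      · have hHeq : H = (⟨(⟨H.1, ⟨hH, H.2.1⟩, H.2.2⟩ : facesC (SS ∩ GG) c).1,
            Set.inter_subset_right (⟨H.1, ⟨hH, H.2.1⟩, H.2.2⟩ : facesC (SS ∩ GG) c).2.1,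
            (⟨H.1, ⟨hH, H.2.1⟩, H.2.2⟩ : facesC (SS ∩ GG) c).2.2⟩ : facesC GG c) :=
          Subtype.ext rfl
        have hL : (incl K _ _ (Set.inter_subset_right) c x) H = u ⟨H.1, hH, H.2.2⟩ := by
          conv_lhs => rw [hHeq]
          erw [incl_apply_mem]
          rfl
        rw [hL]
        have h1 := hcoord ⟨H.1, Set.mem_union_left _ hH, H.2.2⟩
        have e1 : (⟨H.1, Set.mem_union_left _ hH, H.2.2⟩ : facesC (SS ∪ GG) c)
            = ⟨(⟨H.1, hH, H.2.2⟩ : facesC SS c).1,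
              Set.subset_union_left (⟨H.1, hH, H.2.2⟩ : facesC SS c).2.1,
              (⟨H.1, hH, H.2.2⟩ : facesC SS c).2.2⟩ := Subtype.ext rfl
        have e2 : (⟨H.1, Set.mem_union_left _ hH, H.2.2⟩ : facesC (SS ∪ GG) c)
            = ⟨H.1, Set.subset_union_right H.2.1, H.2.2⟩ := Subtype.ext rfl
        rw [show ((incl K SS (SS ∪ GG) Set.subset_union_left c) u)
              ⟨H.1, Set.mem_union_left _ hH, H.2.2⟩ = u ⟨H.1, hH, H.2.2⟩ by
            erw [e1, incl_apply_mem],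
          show ((incl K GG (SS ∪ GG) Set.subset_union_right c) v)
              ⟨H.1, Set.mem_union_left _ hH, H.2.2⟩ = v H by
            rw [e2]
            have : H = (⟨H.1, H.2.1, H.2.2⟩ : facesC GG c) := Subtype.ext rfl
            conv_rhs => rw [this]
            exact incl_apply_mem K GG (SS ∪ GG) _ c v H] at h1
        linear_combination -h1
      · rw [incl_apply_notmem K _ _ _ c x H (fun hc => hH hc.1), neg_zero]
        have h1 := hcoord ⟨H.1, Set.mem_union_right _ H.2.1, H.2.2⟩
        erw [incl_apply_notmem K SS (SS ∪ GG) _ c u ⟨H.1, Set.mem_union_right _ H.2.1, H.2.2⟩ hH] at h1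
        rw [show ((incl K GG (SS ∪ GG) Set.subset_union_right c) v)
              ⟨H.1, Set.mem_union_right _ H.2.1, H.2.2⟩ = v H by
            have : H = (⟨H.1, H.2.1, H.2.2⟩ : facesC GG c) := Subtype.ext rfl
            conv_rhs => rw [this]
            exact incl_apply_mem K GG (SS ∪ GG) _ c v H] at h1
        rw [zero_add] at h1
        exact h1.symm
  · -- range ⊆ ker
    rintro ⟨x, rfl⟩
    show gmap K SS GG c (fmap K SS GG c x) = 0
    rw [gmap, fmap]
    simp only [LinearMap.coprod_apply, LinearMap.prod_apply, Function.prod, LinearMap.neg_apply,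
      map_neg]
    rw [← LinearMap.comp_apply, ← LinearMap.comp_apply, incl_trans, incl_trans]
    simp

lemma range_prodMap' {M M₂ M₃ M₄ : Type} [AddCommGroup M] [AddCommGroup M₂] [AddCommGroup M₃]
    [AddCommGroup M₄] [Module K M] [Module K M₂] [Module K M₃] [Module K M₄]
    (f : M →ₗ[K] M₂) (g : M₃ →ₗ[K] M₄) :
    LinearMap.range (f.prodMap g) = (LinearMap.range f).prod (LinearMap.range g) := by
  ext ⟨x, y⟩
  simp only [LinearMap.mem_range, Submodule.mem_prod, Prod.ext_iff, LinearMap.prodMap_apply,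
    Prod.exists, Prod.map_fst, Prod.map_snd]
  constructor
  · rintro ⟨a, b, h1, h2⟩
    exact ⟨⟨a, h1⟩, ⟨b, h2⟩⟩
  · rintro ⟨⟨a, h1⟩, ⟨b, h2⟩⟩
    exact ⟨a, b, h1, h2⟩

lemma hdim_eq_general (Δ : Set (Finset ℕ)) (i a b : ℤ) (ha : a = i + 1) (hb : b = i + 2) :
    SC.hdim K Δ i = Module.finrank K (LinearMap.ker (SC.bdry K Δ a i)) -
      Module.finrank K (LinearMap.range (SC.bdry K Δ b a)) := by
  subst ha hb; rfl

lemma fmap_comm (hcS : closed SS) (hcG : closed GG) (a b : ℤ) (hb : b = a - 1) :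
    ((SC.bdry K SS a b).prodMap (SC.bdry K GG a b)) ∘ₗ fmap K SS GG a
      = fmap K SS GG b ∘ₗ SC.bdry K (SS ∩ GG) a b := by
  have hcA : closed (SS ∩ GG) := fun F hF G hG => ⟨hcS F hF.1 G hG, hcG F hF.2 G hG⟩
  apply LinearMap.ext
  intro x
  apply Prod.ext
  · simp only [LinearMap.comp_apply, fmap, LinearMap.prodMap_apply, LinearMap.prod_apply,
      Pi.prod, Prod.map_fst]
    exact (LinearMap.congr_fun (incl_comm K _ _ Set.inter_subset_left hcA a b hb) x).symm
  · simp only [LinearMap.comp_apply, fmap, LinearMap.prodMap_apply, LinearMap.prod_apply,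
      Function.prod, Prod.map_snd, LinearMap.neg_apply, map_neg]
    exact congrArg Neg.neg
      (LinearMap.congr_fun (incl_comm K _ _ Set.inter_subset_right hcA a b hb) x).symm

lemma gmap_comm (hcS : closed SS) (hcG : closed GG) (a b : ℤ) (hb : b = a - 1) :
    (SC.bdry K (SS ∪ GG) a b) ∘ₗ gmap K SS GG a
      = gmap K SS GG b ∘ₗ ((SC.bdry K SS a b).prodMap (SC.bdry K GG a b)) := by
  apply LinearMap.ext
  rintro ⟨u, v⟩
  simp only [LinearMap.comp_apply, gmap, LinearMap.coprod_apply, LinearMap.prodMap_apply,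
    Prod.map_fst, Prod.map_snd, map_add]
  rw [← LinearMap.comp_apply (SC.bdry K (SS ∪ GG) a b), ← incl_comm K _ _ Set.subset_union_left hcS a b hb,
    ← LinearMap.comp_apply (SC.bdry K (SS ∪ GG) a b), ← incl_comm K _ _ Set.subset_union_right hcG a b hb]
  rfl

lemma hdim_union (hcS : closed SS) (hcG : closed GG) (N : ℕ)
    (hfinS : ∀ F ∈ SS, F ⊆ Finset.range N) (hfinG : ∀ F ∈ GG, F ⊆ Finset.range N)
    (vS vG : ℕ) (hvS : ∀ F ∈ SS, insert vS F ∈ SS) (hvG : ∀ F ∈ GG, insert vG F ∈ GG)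
    (i : ℤ) :
    SC.hdim K (SS ∪ GG) i = SC.hdim K (SS ∩ GG) (i - 1) := by
  classical
  have hcA : closed (SS ∩ GG) := fun F hF G hG => ⟨hcS F hF.1 G hG, hcG F hF.2 G hG⟩
  have hcE : closed (SS ∪ GG) := by
    rintro F (hF | hF) G hG
    · exact Or.inl (hcS F hF G hG)
    · exact Or.inr (hcG F hF G hG)
  have hfinA : ∀ F ∈ SS ∩ GG, F ⊆ Finset.range N := fun F hF => hfinS F hF.1
  have hfinE : ∀ F ∈ SS ∪ GG, F ⊆ Finset.range N := by
    rintro F (hF | hF)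
    · exact hfinS F hF
    · exact hfinG F hF
  haveI i1 : Module.Finite K (facesC SS (i+1) →₀ K) := by
    haveI := finite_facesC SS N hfinS (i+1); exact fd_finsupp K _
  haveI i2 : Module.Finite K (facesC SS (i+2) →₀ K) := by
    haveI := finite_facesC SS N hfinS (i+2); exact fd_finsupp K _
  haveI i3 : Module.Finite K (facesC GG (i+1) →₀ K) := by
    haveI := finite_facesC GG N hfinG (i+1); exact fd_finsupp K _
  haveI i4 : Module.Finite K (facesC GG (i+2) →₀ K) := by
    haveI := finite_facesC GG N hfinG (i+2); exact fd_finsupp K _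
  haveI i5 : Module.Finite K (facesC (SS ∩ GG) (i+1) →₀ K) := by
    haveI := finite_facesC _ N hfinA (i+1); exact fd_finsupp K _
  haveI i6 : Module.Finite K (facesC (SS ∩ GG) i →₀ K) := by
    haveI := finite_facesC _ N hfinA i; exact fd_finsupp K _
  haveI i7 : Module.Finite K (facesC (SS ∪ GG) (i+1) →₀ K) := by
    haveI := finite_facesC _ N hfinE (i+1); exact fd_finsupp K _
  have key := connect_dim K
    (SC.bdry K (SS ∩ GG) (i+1) i) (SC.bdry K (SS ∩ GG) i (i-1))
    ((SC.bdry K SS (i+2) (i+1)).prodMap (SC.bdry K GG (i+2) (i+1)))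
    ((SC.bdry K SS (i+1) i).prodMap (SC.bdry K GG (i+1) i))
    ((SC.bdry K SS i (i-1)).prodMap (SC.bdry K GG i (i-1)))
    (SC.bdry K (SS ∪ GG) (i+2) (i+1)) (SC.bdry K (SS ∪ GG) (i+1) i)
    (fmap K SS GG (i+1)) (fmap K SS GG i) (fmap K SS GG (i-1))
    (gmap K SS GG (i+2)) (gmap K SS GG (i+1)) (gmap K SS GG i)
    (fmap_injective K SS GG (i+1)) (fmap_injective K SS GG i) (fmap_injective K SS GG (i-1))
    (gmap_surjective K SS GG (i+1)) (gmap_surjective K SS GG (i+2))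
    (mv_exact K SS GG i) (mv_exact K SS GG (i+1))
    (fmap_comm K SS GG hcS hcG (i+1) i (by ring))
    (fmap_comm K SS GG hcS hcG i (i-1) (by ring))
    (gmap_comm K SS GG hcS hcG (i+1) i (by ring))
    (gmap_comm K SS GG hcS hcG (i+2) (i+1) (by ring))
    (by rw [LinearMap.ker_prodMap, range_prodMap' K,
          cone_exact K SS hcS vS hvS (i+2) (i+1) i (by ring) (by ring),
          cone_exact K GG hcG vG hvG (i+2) (i+1) i (by ring) (by ring)])
    (by rw [LinearMap.ker_prodMap, range_prodMap' K,
          cone_exact K SS hcS vS hvS (i+1) i (i-1) (by ring) (by ring),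
          cone_exact K GG hcG vG hvG (i+1) i (i-1) (by ring) (by ring)])
    (by
      apply LinearMap.ext
      rintro ⟨u, v⟩
      simp only [LinearMap.comp_apply, LinearMap.prodMap_apply, Prod.map_fst, Prod.map_snd,
        LinearMap.zero_apply]
      apply Prod.ext
      · have := LinearMap.congr_fun (bdry_bdry K SS hcS (i+1) i (i-1) (by ring) (by ring)) u
        simpa using this
      · have := LinearMap.congr_fun (bdry_bdry K GG hcG (i+1) i (i-1) (by ring) (by ring)) v
        simpa using this)
  have hC : LinearMap.range (SC.bdry K (SS ∪ GG) (i+2) (i+1))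
      ≤ LinearMap.ker (SC.bdry K (SS ∪ GG) (i+1) i) := by
    rintro y ⟨w, rfl⟩
    have := LinearMap.congr_fun (bdry_bdry K (SS ∪ GG) hcE (i+2) (i+1) i (by ring) (by ring)) w
    simpa using this
  have hA : LinearMap.range (SC.bdry K (SS ∩ GG) (i+1) i)
      ≤ LinearMap.ker (SC.bdry K (SS ∩ GG) i (i-1)) := by
    rintro y ⟨w, rfl⟩
    have := LinearMap.congr_fun (bdry_bdry K (SS ∩ GG) hcA (i+1) i (i-1) (by ring) (by ring)) w
    simpa using this
  have le1 : Module.finrank K (LinearMap.range (SC.bdry K (SS ∪ GG) (i+2) (i+1)))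
      ≤ Module.finrank K (LinearMap.ker (SC.bdry K (SS ∪ GG) (i+1) i)) :=
    Submodule.finrank_mono hC
  have le2 : Module.finrank K (LinearMap.range (SC.bdry K (SS ∩ GG) (i+1) i))
      ≤ Module.finrank K (LinearMap.ker (SC.bdry K (SS ∩ GG) i (i-1))) :=
    Submodule.finrank_mono hA
  rw [hdim_eq_general K (SS ∪ GG) i (i+1) (i+2) rfl rfl,
    hdim_eq_general K (SS ∩ GG) (i-1) i (i+1) (by ring) (by ring)]
  omega

end MV

section Relabel
open Module LinearMap

variable (φ : ℕ → ℕ) (hφ : StrictMono φ)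

include hφ

/-- image of a complex under a vertex map -/
def imageC (Δ : Set (Finset ℕ)) : Set (Finset ℕ) := (fun F => F.image φ) '' Δ

/-- equivalence of faces -/
noncomputable def faceEquiv (Δ : Set (Finset ℕ)) (c : ℤ) :
    facesC Δ c ≃ facesC (imageC φ Δ) c := by
  apply Equiv.ofBijective (fun F => (⟨F.1.image φ, ⟨F.1, F.2.1, rfl⟩, by
    rw [Finset.card_image_of_injective _ hφ.injective]; exact F.2.2⟩ : facesC (imageC φ Δ) c))
  constructor
  · intro F G hFG
    exact Subtype.ext (Finset.image_injective hφ.injective (Subtype.mk_eq_mk.mp hFG))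
  · rintro ⟨G, ⟨F, hF, rfl⟩, hc⟩
    refine ⟨⟨F, hF, ?_⟩, Subtype.ext rfl⟩
    rw [Finset.card_image_of_injective _ hφ.injective] at hc
    exact hc

lemma sgn_image (x : ℕ) (F : Finset ℕ) : sgn K (φ x) (F.image φ) = sgn K x F := by
  rw [sgn, sgn]
  congr 1
  rw [show (F.image φ).filter (fun y => y < φ x) = (F.filter (fun y => y < x)).image φ by
    ext z
    simp only [Finset.mem_filter, Finset.mem_image]
    constructor
    · rintro ⟨⟨w, hw, rfl⟩, hz⟩
      exact ⟨w, ⟨hw, hφ.lt_iff_lt.mp hz⟩, rfl⟩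
    · rintro ⟨w, ⟨hw, hwx⟩, rfl⟩
      exact ⟨⟨w, hw, rfl⟩, hφ.lt_iff_lt.mpr hwx⟩]
  rw [Finset.card_image_of_injective _ hφ.injective]

noncomputable def chainEquiv (Δ : Set (Finset ℕ)) (c : ℤ) :
    (facesC Δ c →₀ K) ≃ₗ[K] (facesC (imageC φ Δ) c →₀ K) :=
  Finsupp.domLCongr (faceEquiv φ hφ Δ c)

lemma term_image (Δ : Set (Finset ℕ)) (b : ℤ) (G : Finset ℕ) (k : K) :
    chainEquiv K φ hφ Δ b (term K Δ b G k) = term K (imageC φ Δ) b (G.image φ) k := by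
  by_cases h : G ∈ Δ ∧ ((G.card : ℤ) = b)
  · erw [term, dif_pos h, map_smul, chainEquiv, Finsupp.domLCongr_single, term,
      dif_pos ⟨⟨G, h.1, rfl⟩, by rw [Finset.card_image_of_injective _ hφ.injective]; exact h.2⟩]
    congr 1
  · rw [term, dif_neg h, map_zero, term, dif_neg]
    rintro ⟨⟨F, hF, hFG⟩, hc⟩
    rw [Finset.card_image_of_injective _ hφ.injective] at hc
    exact h ⟨by rw [← Finset.image_injective hφ.injective hFG]; exact hF, hc⟩

lemma chain_comm (Δ : Set (Finset ℕ)) (a b : ℤ) (z : facesC Δ a →₀ K) :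
    SC.bdry K (imageC φ Δ) a b (chainEquiv K φ hφ Δ a z)
      = chainEquiv K φ hφ Δ b (SC.bdry K Δ a b z) := by
  have : (SC.bdry K (imageC φ Δ) a b) ∘ₗ (chainEquiv K φ hφ Δ a : (facesC Δ a →₀ K) →ₗ[K] _)
      = (chainEquiv K φ hφ Δ b : (facesC Δ b →₀ K) →ₗ[K] _) ∘ₗ SC.bdry K Δ a b := by
    refine Finsupp.lhom_ext fun F k => ?_
    have hk : (Finsupp.single F k : facesC Δ a →₀ K) = k • Finsupp.single F 1 := by
      rw [Finsupp.smul_single, smul_eq_mul, mul_one]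
    rw [LinearMap.comp_apply, LinearMap.comp_apply, hk, map_smul, map_smul, map_smul, map_smul]
    congr 1
    rw [LinearEquiv.coe_coe, chainEquiv, Finsupp.domLCongr_single]
    rw [show (Finsupp.single (faceEquiv φ hφ Δ a F) (1:K)) =
        Finsupp.single ((faceEquiv φ hφ Δ a F)) 1 from rfl]
    rw [bdry_single, bdry_single, map_sum]
    rw [show ((faceEquiv φ hφ Δ a F) : facesC (imageC φ Δ) a).1 = F.1.image φ from rfl]
    rw [Finset.sum_image (fun x _ y _ h => hφ.injective h)]
    refine Finset.sum_congr rfl fun x hx => ?_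
    rw [← Finset.image_erase hφ.injective, sgn_image K φ hφ, ← term_image K φ hφ]
    rfl
  exact LinearMap.congr_fun this z

lemma hdim_image (Δ : Set (Finset ℕ)) (i : ℤ) :
    SC.hdim K (imageC φ Δ) i = SC.hdim K Δ i := by
  have hker : ∀ a b : ℤ, ker (SC.bdry K (imageC φ Δ) a b)
      = Submodule.map (chainEquiv K φ hφ Δ a : (facesC Δ a →₀ K) →ₗ[K] _)
        (ker (SC.bdry K Δ a b)) := by
    intro a b
    ext x
    constructor
    · intro hx
      refine ⟨(chainEquiv K φ hφ Δ a).symm x, ?_, by simp⟩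
      have h1 : SC.bdry K (imageC φ Δ) a b (chainEquiv K φ hφ Δ a ((chainEquiv K φ hφ Δ a).symm x))
          = chainEquiv K φ hφ Δ b (SC.bdry K Δ a b ((chainEquiv K φ hφ Δ a).symm x)) :=
        chain_comm K φ hφ Δ a b _
      rw [LinearEquiv.apply_symm_apply] at h1
      rw [mem_ker.mp hx] at h1
      exact mem_ker.mpr ((chainEquiv K φ hφ Δ b).map_eq_zero_iff.mp h1.symm)
    · rintro ⟨z, hz, rfl⟩
      show SC.bdry K (imageC φ Δ) a b (chainEquiv K φ hφ Δ a z) = 0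
      rw [chain_comm K φ hφ Δ a b z, mem_ker.mp hz, map_zero]
  have hrange : ∀ a b : ℤ, range (SC.bdry K (imageC φ Δ) a b)
      = Submodule.map (chainEquiv K φ hφ Δ b : (facesC Δ b →₀ K) →ₗ[K] _)
        (range (SC.bdry K Δ a b)) := by
    intro a b
    ext x
    constructor
    · rintro ⟨w, rfl⟩
      refine ⟨SC.bdry K Δ a b ((chainEquiv K φ hφ Δ a).symm w), ⟨_, rfl⟩, ?_⟩
      have h2 := chain_comm K φ hφ Δ a b ((chainEquiv K φ hφ Δ a).symm w)
      rw [LinearEquiv.apply_symm_apply] at h2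
      exact h2.symm
    · rintro ⟨z, ⟨w, rfl⟩, rfl⟩
      exact ⟨chainEquiv K φ hφ Δ a w, (chain_comm K φ hφ Δ a b w)⟩
  rw [SC.hdim, SC.hdim, hker (i+1) i, hrange (i+2) (i+1),
    LinearEquiv.finrank_map_eq, LinearEquiv.finrank_map_eq]

end Relabel

end SRR

namespace SRR
open SC
variable (K : Type) [Field K]

lemma gen_closed (S : Set (Finset ℕ)) : closed (SC.gen S) :=
  fun _ ⟨A, hA, hFA⟩ G hG => ⟨A, hA, hG.trans hFA⟩

lemma gen_union (S T : Set (Finset ℕ)) : SC.gen (S ∪ T) = SC.gen S ∪ SC.gen T := by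
  ext F
  constructor
  · rintro ⟨A, hA | hA, hFA⟩
    · exact Or.inl ⟨A, hA, hFA⟩
    · exact Or.inr ⟨A, hA, hFA⟩
  · rintro (⟨A, hA, hFA⟩ | ⟨A, hA, hFA⟩)
    · exact ⟨A, Or.inl hA, hFA⟩
    · exact ⟨A, Or.inr hA, hFA⟩

lemma gen_cone (S : Set (Finset ℕ)) (v : ℕ) (hv : ∀ A ∈ S, v ∈ A) :
    ∀ F ∈ SC.gen S, insert v F ∈ SC.gen S := by
  rintro F ⟨A, hA, hFA⟩
  exact ⟨A, hA, Finset.insert_subset (hv A hA) hFA⟩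

lemma gen_bound (S : Set (Finset ℕ)) (N : ℕ) (h : ∀ A ∈ S, A ⊆ Finset.range N) :
    ∀ F ∈ SC.gen S, F ⊆ Finset.range N := by
  rintro F ⟨A, hA, hFA⟩
  exact hFA.trans (h A hA)

lemma image_gen (φ : ℕ → ℕ) (hinj : Function.Injective φ) (S : Set (Finset ℕ)) :
    imageC φ (SC.gen S) = SC.gen ((fun F => F.image φ) '' S) := by
  ext G
  constructor
  · rintro ⟨F, ⟨A, hA, hFA⟩, rfl⟩
    exact ⟨A.image φ, ⟨A, hA, rfl⟩, Finset.image_subset_image hFA⟩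
  · rintro ⟨_, ⟨A, hA, rfl⟩, hGA⟩
    refine ⟨A.filter (fun x => φ x ∈ G), ⟨A, hA, Finset.filter_subset _ _⟩, ?_⟩
    ext z
    simp only [Finset.mem_image, Finset.mem_filter]
    constructor
    · rintro ⟨w, ⟨_, hw2⟩, rfl⟩
      exact hw2
    · intro hz
      obtain ⟨w, hw, rfl⟩ := Finset.mem_image.mp (hGA hz)
      exact ⟨w, ⟨hw, hz⟩, rfl⟩

def off (t : ℕ) (L : List ℕ) : ℕ := (L.map (· + t)).sum

lemma off_nil (t : ℕ) : off t [] = 0 := rfl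

lemma off_cons (t s : ℕ) (L : List ℕ) : off t (s :: L) = s + t + off t L := by
  simp [off, List.map_cons, List.sum_cons]

lemma runsFacets_append (t : ℕ) (L M : List ℕ) : ∀ a : ℕ,
    runsFacets t a (L ++ M) = runsFacets t a L ∪ runsFacets t (a + off t L) M := by
  induction L with
  | nil => intro a; simp [runsFacets, off_nil]
  | cons s L ih =>
    intro a
    show runFacets t a s ∪ runsFacets t (a + s + t) (L ++ M) = _
    rw [ih (a + s + t), runsFacets, Set.union_assoc]
    rw [off_cons, show a + s + t + off t L = a + (s + t + off t L) from by ring]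

lemma runsVerts_append (t : ℕ) (L M : List ℕ) : ∀ a : ℕ,
    runsVerts t a (L ++ M) = runsVerts t a L ∪ runsVerts t (a + off t L) M := by
  induction L with
  | nil => intro a; simp [runsVerts, off_nil]
  | cons s L ih =>
    intro a
    show Finset.Ico a (a + s + t - 1) ∪ runsVerts t (a + s + t) (L ++ M) = _
    rw [ih (a + s + t), runsVerts, Finset.union_assoc]
    rw [off_cons, show a + s + t + off t L = a + (s + t + off t L) from by ring]

lemma runsVerts_subset (t : ℕ) (L : List ℕ) : ∀ a : ℕ,
    runsVerts t a L ⊆ Finset.Ico a (a + off t L) := by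
  induction L with
  | nil => intro a; simp [runsVerts]
  | cons s L ih =>
    intro a
    rw [runsVerts, off_cons]
    apply Finset.union_subset
    · apply Finset.Ico_subset_Ico (le_refl a)
      omega
    · refine (ih (a + s + t)).trans (Finset.Ico_subset_Ico ?_ ?_) <;> omega

lemma runFacets_subset (t a s : ℕ) (ht : 1 ≤ t) (F : Finset ℕ) (hF : F ∈ runFacets t a s) :
    F ⊆ Finset.Ico a (a + s + t - 1) := by
  obtain ⟨i, hi, rfl⟩ := hF
  apply Finset.Ico_subset_Ico <;> omega

lemma runsFacets_subset (t : ℕ) (ht : 1 ≤ t) (L : List ℕ) : ∀ a : ℕ,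
    ∀ F ∈ runsFacets t a L, F ⊆ runsVerts t a L := by
  induction L with
  | nil => intro a F hF; exact absurd hF (by simp [runsFacets])
  | cons s L ih =>
    rintro a F (hF | hF)
    · exact (runFacets_subset t a s ht F hF).trans Finset.subset_union_left
    · exact (ih (a + s + t) F hF).trans Finset.subset_union_right

lemma runsVerts_shift (t c : ℕ) (ht : 1 ≤ t) (L : List ℕ) : ∀ a : ℕ,
    runsVerts t (a + c) L = (runsVerts t a L).image (· + c) := by
  induction L with
  | nil => intro a; simp [runsVerts]
  | cons s L ih =>
    intro a
    rw [runsVerts, runsVerts, Finset.image_union, ← ih (a + s + t)]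
    congr 1
    · rw [show a+c+s+t-1 = (a+s+t-1)+c from by omega, Finset.image_add_right_Ico]
    · congr 1
      omega

lemma runFacets_shift (t c a s : ℕ) :
    runFacets t (a + c) s = (fun F => F.image (· + c)) '' runFacets t a s := by
  ext F
  constructor
  · rintro ⟨i, hi, rfl⟩
    refine ⟨Finset.Ico (a+i) (a+i+t), ⟨i, hi, rfl⟩, ?_⟩
    show Finset.image (· + c) (Finset.Ico (a+i) (a+i+t)) = _
    rw [Finset.image_add_right_Ico]
    congr 1 <;> omega
  · rintro ⟨G, ⟨i, hi, rfl⟩, rfl⟩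
    refine ⟨i, hi, ?_⟩
    show (fun F => Finset.image (· + c) F) (Finset.Ico (a+i) (a+i+t)) = _
    show Finset.image (· + c) (Finset.Ico (a+i) (a+i+t)) = _
    rw [Finset.image_add_right_Ico]
    congr 1 <;> omega

lemma runsFacets_shift (t c : ℕ) (L : List ℕ) : ∀ a : ℕ,
    runsFacets t (a + c) L = (fun F => F.image (· + c)) '' runsFacets t a L := by
  induction L with
  | nil => intro a; simp [runsFacets]
  | cons s L ih =>
    intro a
    rw [runsFacets, runsFacets, Set.image_union, ← runFacets_shift,
      show a + c + s + t = (a + s + t) + c from by ring, ih (a + s + t)]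

lemma runsVerts_nonempty (t : ℕ) (ht : 2 ≤ t) (L : List ℕ) (hL : L ≠ []) (a : ℕ) :
    (runsVerts t a L).Nonempty := by
  match L with
  | [] => exact absurd rfl hL
  | s :: L =>
    refine ⟨a, ?_⟩
    rw [runsVerts, Finset.mem_union]
    exact Or.inl (Finset.mem_Ico.mpr ⟨le_refl a, by omega⟩)

end SRR

namespace SRR
open SC
variable (K : Type) [Field K]

lemma hdim_Epp (t s : ℕ) (ht : 2 ≤ t) (L1 L2 : List ℕ) (i : ℤ) :
    SC.hdim K (SC.gen {G | ∃ F ∈ runsFacets t 0 L1 ∪ runsFacets t (off t L1 + s + t) L2,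
      G = (runsVerts t 0 L1 ∪ runsVerts t (off t L1 + s + t) L2) \ F}) i
    = SC.hdim K (EC t (L1 ++ L2)) i := by
  classical
  set a := off t L1 with ha
  set ψ : ℕ → ℕ := fun x => if x < a then x else x + (s + t) with hψ
  have hψmono : StrictMono ψ := by
    intro x y hxy
    rw [hψ]
    dsimp only
    split <;> split <;> omega
  -- pointwise behaviour
  have hψlow : ∀ X : Finset ℕ, X ⊆ Finset.Ico 0 a → X.image ψ = X := by
    intro X hX
    rw [Finset.image_congr (g := id) (fun x hx => by
      have := Finset.mem_Ico.mp (hX hx)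
      rw [hψ]; dsimp only; rw [if_pos this.2]; rfl), Finset.image_id]
  have hψhigh : ∀ X : Finset ℕ, (∀ x ∈ X, a ≤ x) → X.image ψ = X.image (· + (s + t)) := by
    intro X hX
    apply Finset.image_congr
    intro x hx
    rw [hψ]; dsimp only; rw [if_neg (by have := hX x hx; omega)]
  have hW1 : runsVerts t 0 L1 ⊆ Finset.Ico 0 a := by
    have := runsVerts_subset t L1 0
    rwa [zero_add, ← ha] at this
  have hW2 : ∀ x ∈ runsVerts t a L2, a ≤ x := by
    intro x hx
    exact (Finset.mem_Ico.mp (runsVerts_subset t L2 a hx)).1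
  have hF1 : ∀ F ∈ runsFacets t 0 L1, F ⊆ Finset.Ico 0 a :=
    fun F hF => (runsFacets_subset t (by omega) L1 0 F hF).trans hW1
  have hF2 : ∀ F ∈ runsFacets t a L2, ∀ x ∈ F, a ≤ x :=
    fun F hF x hx => hW2 x (runsFacets_subset t (by omega) L2 a F hF hx)
  -- the image identification
  have hVim : (runsVerts t 0 L1 ∪ runsVerts t a L2).image ψ
      = runsVerts t 0 L1 ∪ runsVerts t (a + s + t) L2 := by
    rw [Finset.image_union, hψlow _ hW1, hψhigh _ hW2,
      show a + s + t = a + (s + t) from by ring, runsVerts_shift t (s+t) (by omega) L2 a]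
  have hfam : ((fun F => F.image ψ) ''
        {G | ∃ F ∈ runsFacets t 0 L1 ∪ runsFacets t a L2,
          G = (runsVerts t 0 L1 ∪ runsVerts t a L2) \ F})
      = {G | ∃ F ∈ runsFacets t 0 L1 ∪ runsFacets t (a + s + t) L2,
          G = (runsVerts t 0 L1 ∪ runsVerts t (a + s + t) L2) \ F} := by
    ext G
    constructor
    · rintro ⟨G0, ⟨F, hF, rfl⟩, rfl⟩
      rcases hF with hF | hF
      · refine ⟨F, Or.inl hF, ?_⟩
        show (_ \ F).image ψ = _
        rw [Finset.image_sdiff _ _ hψmono.injective, hVim, hψlow F (hF1 F hF)]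
      · refine ⟨F.image (· + (s + t)), Or.inr ?_, ?_⟩
        · rw [show a + s + t = a + (s + t) from by ring, runsFacets_shift t (s+t) L2 a]
          exact ⟨F, hF, rfl⟩
        · show (_ \ F).image ψ = _
          rw [Finset.image_sdiff _ _ hψmono.injective, hVim, hψhigh F (hF2 F hF)]
    · rintro ⟨F', hF', rfl⟩
      rcases hF' with hF' | hF'
      · refine ⟨(runsVerts t 0 L1 ∪ runsVerts t a L2) \ F', ⟨F', Or.inl hF', rfl⟩, ?_⟩
        show (_ \ F').image ψ = _
        rw [Finset.image_sdiff _ _ hψmono.injective, hVim, hψlow F' (hF1 F' hF')]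
      · rw [show a + s + t = a + (s + t) from by ring, runsFacets_shift t (s+t) L2 a] at hF'
        obtain ⟨F, hF, rfl⟩ := hF'
        refine ⟨(runsVerts t 0 L1 ∪ runsVerts t a L2) \ F, ⟨F, Or.inr hF, rfl⟩, ?_⟩
        show (_ \ F).image ψ = _
        rw [Finset.image_sdiff _ _ hψmono.injective, hVim, hψhigh F (hF2 F hF)]
  have himg : imageC ψ (EC t (L1 ++ L2))
      = SC.gen {G | ∃ F ∈ runsFacets t 0 L1 ∪ runsFacets t (a + s + t) L2,
        G = (runsVerts t 0 L1 ∪ runsVerts t (a + s + t) L2) \ F} := by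
    rw [EC, image_gen ψ hψmono.injective, runsFacets_append, runsVerts_append, zero_add, ← ha,
      hfam]
  rw [← himg, hdim_image K ψ hψmono]

end SRR

namespace SRR
open SC
variable (K : Type) [Field K]

lemma runFacets_one (t a : ℕ) : runFacets t a 1 = {Finset.Ico a (a + t)} := by
  ext F
  constructor
  · rintro ⟨i, hi, rfl⟩
    have : i = 0 := by omega
    subst this
    show Finset.Ico (a + 0) (a + 0 + t) = Finset.Ico a (a + t)
    norm_num
  · rintro rfl
    exact ⟨0, one_pos, by norm_num⟩

lemma hdim_one (t : ℕ) (ht : 2 ≤ t) (L1 L2 : List ℕ) (hr : L1 ++ L2 ≠ []) (i : ℤ) :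
    SC.hdim K (EC t (L1 ++ 1 :: L2)) i
      = SC.hdim K (SC.gen {G | ∃ F ∈ runsFacets t 0 L1 ∪ runsFacets t (off t L1 + 1 + t) L2,
          G = (runsVerts t 0 L1 ∪ runsVerts t (off t L1 + 1 + t) L2) \ F}) (i - 1) := by
  classical
  set a := off t L1 with ha
  set W1 := runsVerts t 0 L1 with hW1d
  set W2 := runsVerts t (a + 1 + t) L2 with hW2d
  set F1 := runsFacets t 0 L1 with hF1d
  set F2 := runsFacets t (a + 1 + t) L2 with hF2d
  set R : Finset ℕ := Finset.Ico a (a + t) with hRd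
  set V' := W1 ∪ W2 with hV'd
  set N := a + 1 + t + off t L2 with hNd
  -- pointwise bounds
  have hzW1 : ∀ z ∈ W1, z < a := by
    intro z hz
    have := runsVerts_subset t L1 0 hz
    rw [zero_add] at this
    exact (Finset.mem_Ico.mp this).2
  have hzW2 : ∀ z ∈ W2, a + 1 + t ≤ z ∧ z < N := by
    intro z hz
    have := Finset.mem_Ico.mp (runsVerts_subset t L2 (a + 1 + t) hz)
    exact ⟨this.1, this.2⟩
  have hzR : ∀ z ∈ R, a ≤ z ∧ z < a + t := fun z hz => Finset.mem_Ico.mp hz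
  have hzF1 : ∀ F ∈ F1, ∀ z ∈ F, z < a :=
    fun F hF z hz => hzW1 z (runsFacets_subset t (by omega) L1 0 F hF hz)
  have hzF2 : ∀ F ∈ F2, ∀ z ∈ F, a + 1 + t ≤ z ∧ z < N :=
    fun F hF z hz => hzW2 z (runsFacets_subset t (by omega) L2 (a+1+t) F hF hz)
  have hsubF1 : ∀ F ∈ F1, F ⊆ V' :=
    fun F hF => (runsFacets_subset t (by omega) L1 0 F hF).trans Finset.subset_union_left
  have hsubF2 : ∀ F ∈ F2, F ⊆ V' :=
    fun F hF => (runsFacets_subset t (by omega) L2 (a+1+t) F hF).trans Finset.subset_union_right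
  -- decomposition of the vertex set and facet set
  have hVeq : runsVerts t 0 (L1 ++ 1 :: L2) = W1 ∪ (R ∪ W2) := by
    rw [runsVerts_append, zero_add, ← ha]
    show W1 ∪ runsVerts t a (1 :: L2) = _
    rw [runsVerts, show a + 1 + t - 1 = a + t from by omega]
  have hFeq : runsFacets t 0 (L1 ++ 1 :: L2) = F1 ∪ (({R} : Set (Finset ℕ)) ∪ F2) := by
    rw [runsFacets_append, zero_add, ← ha]
    show F1 ∪ runsFacets t a (1 :: L2) = _
    rw [runsFacets, runFacets_one]
  -- the two sdiff identities
  have hVR : (W1 ∪ (R ∪ W2)) \ R = V' := by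
    ext z
    simp only [Finset.mem_union, Finset.mem_sdiff, hV'd]
    constructor
    · rintro ⟨(h | h | h), hn⟩
      · exact Or.inl h
      · exact absurd h hn
      · exact Or.inr h
    · rintro (h | h)
      · exact ⟨Or.inl h, fun hc => by have := hzW1 z h; have := hzR z hc; omega⟩
      · exact ⟨Or.inr (Or.inr h), fun hc => by have := hzW2 z h; have := hzR z hc; omega⟩
  have hVF : ∀ F : Finset ℕ, (∀ z ∈ F, z < a ∨ a + 1 + t ≤ z) →
      (W1 ∪ (R ∪ W2)) \ F = R ∪ (V' \ F) := by
    intro F hF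
    ext z
    simp only [Finset.mem_union, Finset.mem_sdiff, hV'd]
    constructor
    · rintro ⟨(h | h | h), hn⟩
      · exact Or.inr ⟨Or.inl h, hn⟩
      · exact Or.inl h
      · exact Or.inr ⟨Or.inr h, hn⟩
    · rintro (h | ⟨(h | h), hn⟩)
      · refine ⟨Or.inr (Or.inl h), fun hc => ?_⟩
        have := hzR z h
        rcases hF z hc with h' | h' <;> omega
      · exact ⟨Or.inl h, hn⟩
      · exact ⟨Or.inr (Or.inr h), hn⟩
  -- generator family decomposition
  have hGen : {G | ∃ F ∈ runsFacets t 0 (L1 ++ 1 :: L2), G = runsVerts t 0 (L1 ++ 1 :: L2) \ F}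
      = ({V'} : Set (Finset ℕ)) ∪ {G | ∃ F ∈ F1 ∪ F2, G = R ∪ (V' \ F)} := by
    rw [hVeq, hFeq]
    ext G
    constructor
    · rintro ⟨F, (hF | hF | hF), rfl⟩
      · exact Or.inr ⟨F, Or.inl hF, hVF F (fun z hz => Or.inl (hzF1 F hF z hz))⟩
      · rw [hF, hVR]
        exact Or.inl rfl
      · exact Or.inr ⟨F, Or.inr hF, hVF F (fun z hz => Or.inr (hzF2 F hF z hz).1)⟩
    · rintro (rfl | ⟨F, (hF | hF), rfl⟩)
      · exact ⟨R, Or.inr (Or.inl rfl), hVR.symm⟩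
      · exact ⟨F, Or.inl hF, (hVF F (fun z hz => Or.inl (hzF1 F hF z hz))).symm⟩
      · exact ⟨F, Or.inr (Or.inr hF), (hVF F (fun z hz => Or.inr (hzF2 F hF z hz).1)).symm⟩
  -- apex of the simplex part
  have hex : V'.Nonempty := by
    cases L1 with
    | nil =>
      have hL2 : L2 ≠ [] := by simpa using hr
      obtain ⟨w, hw⟩ := runsVerts_nonempty t ht L2 hL2 (a + 1 + t)
      exact ⟨w, Finset.mem_union_right _ hw⟩
    | cons s L =>
      obtain ⟨w, hw⟩ := runsVerts_nonempty t ht (s :: L) (by simp) 0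
      exact ⟨w, Finset.mem_union_left _ hw⟩
  obtain ⟨w, hwV'⟩ := hex
  -- apply Mayer-Vietoris
  rw [EC, hGen, gen_union]
  have hMV := hdim_union K (SC.gen ({V'} : Set (Finset ℕ)))
    (SC.gen {G | ∃ F ∈ F1 ∪ F2, G = R ∪ (V' \ F)})
    (gen_closed _) (gen_closed _) N
    (gen_bound _ N (by
      rintro A rfl
      intro z hz
      rw [Finset.mem_range]
      rcases Finset.mem_union.mp hz with h | h
      · have := hzW1 z h; omega
      · exact (hzW2 z h).2))
    (gen_bound _ N (by
      rintro A ⟨F, hF, rfl⟩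
      intro z hz
      rw [Finset.mem_range]
      rcases Finset.mem_union.mp hz with h | h
      · have := hzR z h; omega
      · rcases Finset.mem_union.mp (Finset.mem_sdiff.mp h).1 with h' | h'
        · have := hzW1 z h'; omega
        · exact (hzW2 z h').2))
    w a
    (gen_cone _ w (by rintro A rfl; exact hwV'))
    (gen_cone _ a (by
      rintro A ⟨F, hF, rfl⟩
      exact Finset.mem_union_left _ (Finset.mem_Ico.mpr ⟨le_refl a, by omega⟩)))
    i
  rw [hMV]
  congr 1
  -- identify the intersection
  ext G
  constructor
  · rintro ⟨⟨A, hA, hGA⟩, ⟨B, ⟨F, hF, rfl⟩, hGB⟩⟩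
    rw [Set.mem_singleton_iff] at hA
    subst hA
    refine ⟨V' \ F, ⟨F, hF, rfl⟩, ?_⟩
    intro z hz
    have hzV' : z ∈ V' := hGA hz
    rcases Finset.mem_union.mp (hGB hz) with h | h
    · exfalso
      have := hzR z h
      rcases Finset.mem_union.mp hzV' with h' | h'
      · have := hzW1 z h'; omega
      · have := hzW2 z h'; omega
    · exact h
  · rintro ⟨A, ⟨F, hF, rfl⟩, hGA⟩
    exact ⟨⟨V', rfl, hGA.trans (Finset.sdiff_subset)⟩,
      ⟨R ∪ (V' \ F), ⟨F, hF, rfl⟩, hGA.trans Finset.subset_union_right⟩⟩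

end SRR

namespace SRR
open SC
variable (K : Type) [Field K]

lemma runFacets_two (t a : ℕ) :
    runFacets t a 2 = {Finset.Ico a (a + t), Finset.Ico (a + 1) (a + 1 + t)} := by
  ext F
  constructor
  · rintro ⟨i, hi, rfl⟩
    interval_cases i
    · exact Or.inl (by norm_num)
    · exact Or.inr (by norm_num)
  · rintro (rfl | rfl)
    · exact ⟨0, by omega, by norm_num⟩
    · exact ⟨1, by omega, rfl⟩

lemma hdim_two (t : ℕ) (ht : 2 ≤ t) (L1 L2 : List ℕ) (hr : L1 ++ L2 ≠ []) (i : ℤ) :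
    SC.hdim K (EC t (L1 ++ 2 :: L2)) i
      = SC.hdim K (SC.gen {G | ∃ F ∈ runsFacets t 0 L1 ∪ runsFacets t (off t L1 + 2 + t) L2,
          G = (runsVerts t 0 L1 ∪ runsVerts t (off t L1 + 2 + t) L2) \ F}) (i - 2) := by
  classical
  set a := off t L1 with ha
  set W1 := runsVerts t 0 L1 with hW1d
  set W2 := runsVerts t (a + 2 + t) L2 with hW2d
  set F1 := runsFacets t 0 L1 with hF1d
  set F2 := runsFacets t (a + 2 + t) L2 with hF2d
  set R : Finset ℕ := Finset.Ico a (a + t + 1) with hRd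
  set V' := W1 ∪ W2 with hV'd
  set N := a + 2 + t + off t L2 with hNd
  -- pointwise bounds
  have hzW1 : ∀ z ∈ W1, z < a := by
    intro z hz
    have := runsVerts_subset t L1 0 hz
    rw [zero_add] at this
    exact (Finset.mem_Ico.mp this).2
  have hzW2 : ∀ z ∈ W2, a + 2 + t ≤ z ∧ z < N := by
    intro z hz
    have := Finset.mem_Ico.mp (runsVerts_subset t L2 (a + 2 + t) hz)
    exact ⟨this.1, this.2⟩
  have hzR : ∀ z ∈ R, a ≤ z ∧ z < a + t + 1 := fun z hz => Finset.mem_Ico.mp hz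
  have hzV' : ∀ z ∈ V', z < a ∨ (a + 2 + t ≤ z ∧ z < N) := by
    intro z hz
    rcases Finset.mem_union.mp hz with h | h
    · exact Or.inl (hzW1 z h)
    · exact Or.inr (hzW2 z h)
  have hzF1 : ∀ F ∈ F1, ∀ z ∈ F, z < a :=
    fun F hF z hz => hzW1 z (runsFacets_subset t (by omega) L1 0 F hF hz)
  have hzF2 : ∀ F ∈ F2, ∀ z ∈ F, a + 2 + t ≤ z ∧ z < N :=
    fun F hF z hz => hzW2 z (runsFacets_subset t (by omega) L2 (a+2+t) F hF hz)
  -- decomposition of the vertex set and facet set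
  have hVeq : runsVerts t 0 (L1 ++ 2 :: L2) = W1 ∪ (R ∪ W2) := by
    rw [runsVerts_append, zero_add, ← ha]
    show W1 ∪ runsVerts t a (2 :: L2) = _
    rw [runsVerts, show a + 2 + t - 1 = a + t + 1 from by omega]
  have hFeq : runsFacets t 0 (L1 ++ 2 :: L2)
      = F1 ∪ (({Finset.Ico a (a + t), Finset.Ico (a + 1) (a + 1 + t)} : Set (Finset ℕ)) ∪ F2) := by
    rw [runsFacets_append, zero_add, ← ha]
    show F1 ∪ runsFacets t a (2 :: L2) = _
    rw [runsFacets, runFacets_two]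
  -- sdiff identities
  have hVF0 : (W1 ∪ (R ∪ W2)) \ Finset.Ico a (a + t) = insert (a + t) V' := by
    ext z
    simp only [Finset.mem_union, Finset.mem_sdiff, Finset.mem_insert, Finset.mem_Ico, hV'd]
    constructor
    · rintro ⟨(h | h | h), hn⟩
      · exact Or.inr (Or.inl h)
      · have := hzR z h; omega
      · exact Or.inr (Or.inr h)
    · rintro (rfl | h | h)
      · refine ⟨Or.inr (Or.inl (Finset.mem_Ico.mpr (by omega))), by omega⟩
      · exact ⟨Or.inl h, fun hc => by have := hzW1 z h; omega⟩
      · exact ⟨Or.inr (Or.inr h), fun hc => by have := hzW2 z h; omega⟩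
  have hVF1 : (W1 ∪ (R ∪ W2)) \ Finset.Ico (a + 1) (a + 1 + t) = insert a V' := by
    ext z
    simp only [Finset.mem_union, Finset.mem_sdiff, Finset.mem_insert, Finset.mem_Ico, hV'd]
    constructor
    · rintro ⟨(h | h | h), hn⟩
      · exact Or.inr (Or.inl h)
      · have := hzR z h; omega
      · exact Or.inr (Or.inr h)
    · rintro (rfl | h | h)
      · refine ⟨Or.inr (Or.inl (Finset.mem_Ico.mpr (by omega))), by omega⟩
      · exact ⟨Or.inl h, fun hc => by have := hzW1 z h; omega⟩
      · exact ⟨Or.inr (Or.inr h), fun hc => by have := hzW2 z h; omega⟩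
  have hVF : ∀ F : Finset ℕ, (∀ z ∈ F, z < a ∨ a + 2 + t ≤ z) →
      (W1 ∪ (R ∪ W2)) \ F = R ∪ (V' \ F) := by
    intro F hF
    ext z
    simp only [Finset.mem_union, Finset.mem_sdiff, hV'd]
    constructor
    · rintro ⟨(h | h | h), hn⟩
      · exact Or.inr ⟨Or.inl h, hn⟩
      · exact Or.inl h
      · exact Or.inr ⟨Or.inr h, hn⟩
    · rintro (h | ⟨(h | h), hn⟩)
      · refine ⟨Or.inr (Or.inl h), fun hc => ?_⟩
        have := hzR z h
        rcases hF z hc with h' | h' <;> omega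
      · exact ⟨Or.inl h, hn⟩
      · exact ⟨Or.inr (Or.inr h), hn⟩
  have hGen : {G | ∃ F ∈ runsFacets t 0 (L1 ++ 2 :: L2), G = runsVerts t 0 (L1 ++ 2 :: L2) \ F}
      = ({insert (a+t) V', insert a V'} : Set (Finset ℕ))
          ∪ {G | ∃ F ∈ F1 ∪ F2, G = R ∪ (V' \ F)} := by
    rw [hVeq, hFeq]
    ext G
    constructor
    · rintro ⟨F, (hF | (rfl | rfl) | hF), rfl⟩
      · exact Or.inr ⟨F, Or.inl hF, hVF F (fun z hz => Or.inl (hzF1 F hF z hz))⟩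
      · rw [hVF0]
        exact Or.inl (Or.inl rfl)
      · rw [hVF1]
        exact Or.inl (Or.inr rfl)
      · exact Or.inr ⟨F, Or.inr hF, hVF F (fun z hz => Or.inr (hzF2 F hF z hz).1)⟩
    · rintro ((rfl | rfl) | ⟨F, (hF | hF), rfl⟩)
      · exact ⟨Finset.Ico a (a+t), Or.inr (Or.inl (Or.inl rfl)), hVF0.symm⟩
      · exact ⟨Finset.Ico (a+1) (a+1+t), Or.inr (Or.inl (Or.inr rfl)), hVF1.symm⟩
      · exact ⟨F, Or.inl hF, (hVF F (fun z hz => Or.inl (hzF1 F hF z hz))).symm⟩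
      · exact ⟨F, Or.inr (Or.inr hF), (hVF F (fun z hz => Or.inr (hzF2 F hF z hz).1)).symm⟩
  -- apex
  have hex : V'.Nonempty := by
    cases L1 with
    | nil =>
      have hL2 : L2 ≠ [] := by simpa using hr
      obtain ⟨w, hw⟩ := runsVerts_nonempty t ht L2 hL2 (a + 2 + t)
      exact ⟨w, Finset.mem_union_right _ hw⟩
    | cons s L =>
      obtain ⟨w, hw⟩ := runsVerts_nonempty t ht (s :: L) (by simp) 0
      exact ⟨w, Finset.mem_union_left _ hw⟩
  obtain ⟨w, hwV'⟩ := hex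
  have haR : a ∈ R := Finset.mem_Ico.mpr ⟨le_refl a, by omega⟩
  have hatR : a + t ∈ R := Finset.mem_Ico.mpr ⟨by omega, by omega⟩
  -- first Mayer-Vietoris
  rw [EC, hGen, gen_union]
  have hMV := hdim_union K (SC.gen ({insert (a+t) V', insert a V'} : Set (Finset ℕ)))
    (SC.gen {G | ∃ F ∈ F1 ∪ F2, G = R ∪ (V' \ F)})
    (gen_closed _) (gen_closed _) N
    (gen_bound _ N (by
      rintro A (rfl | rfl) <;> intro z hz <;> rw [Finset.mem_range]
      · rcases Finset.mem_insert.mp hz with rfl | h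
        · omega
        · rcases hzV' z h with h' | h' <;> omega
      · rcases Finset.mem_insert.mp hz with rfl | h
        · omega
        · rcases hzV' z h with h' | h' <;> omega))
    (gen_bound _ N (by
      rintro A ⟨F, hF, rfl⟩
      intro z hz
      rw [Finset.mem_range]
      rcases Finset.mem_union.mp hz with h | h
      · have := hzR z h; omega
      · rcases hzV' z (Finset.mem_sdiff.mp h).1 with h' | h' <;> omega))
    w a
    (gen_cone _ w (by rintro A (rfl | rfl) <;> exact Finset.mem_insert_of_mem hwV'))
    (gen_cone _ a (by
      rintro A ⟨F, hF, rfl⟩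
      exact Finset.mem_union_left _ haR))
    i
  rw [hMV]
  -- identify first intersection with D
  have hInt1 : SC.gen ({insert (a+t) V', insert a V'} : Set (Finset ℕ))
      ∩ SC.gen {G | ∃ F ∈ F1 ∪ F2, G = R ∪ (V' \ F)}
      = SC.gen ({G | ∃ F ∈ F1 ∪ F2, G = insert (a+t) (V' \ F)}
          ∪ {G | ∃ F ∈ F1 ∪ F2, G = insert a (V' \ F)}) := by
    ext G
    constructor
    · rintro ⟨⟨A, (rfl | rfl), hGA⟩, ⟨B, ⟨F, hF, rfl⟩, hGB⟩⟩
      · refine ⟨insert (a+t) (V' \ F), Or.inl ⟨F, hF, rfl⟩, ?_⟩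
        intro z hz
        rcases Finset.mem_insert.mp (hGA hz) with rfl | h
        · exact Finset.mem_insert_self _ _
        · rcases Finset.mem_union.mp (hGB hz) with h' | h'
          · exfalso
            have := hzR z h'
            rcases hzV' z h with h'' | h'' <;> omega
          · exact Finset.mem_insert_of_mem h'
      · refine ⟨insert a (V' \ F), Or.inr ⟨F, hF, rfl⟩, ?_⟩
        intro z hz
        rcases Finset.mem_insert.mp (hGA hz) with rfl | h
        · exact Finset.mem_insert_self _ _
        · rcases Finset.mem_union.mp (hGB hz) with h' | h'
          · exfalso
            have := hzR z h'
            rcases hzV' z h with h'' | h'' <;> omega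
          · exact Finset.mem_insert_of_mem h'
    · rintro ⟨A, (⟨F, hF, rfl⟩ | ⟨F, hF, rfl⟩), hGA⟩
      · exact ⟨⟨insert (a+t) V', Or.inl rfl,
            hGA.trans (Finset.insert_subset_insert _ (Finset.sdiff_subset))⟩,
          ⟨R ∪ (V' \ F), ⟨F, hF, rfl⟩,
            hGA.trans (Finset.insert_subset (Finset.mem_union_left _ hatR)
              Finset.subset_union_right)⟩⟩
      · exact ⟨⟨insert a V', Or.inr rfl,
            hGA.trans (Finset.insert_subset_insert _ (Finset.sdiff_subset))⟩,
          ⟨R ∪ (V' \ F), ⟨F, hF, rfl⟩,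
            hGA.trans (Finset.insert_subset (Finset.mem_union_left _ haR)
              Finset.subset_union_right)⟩⟩
  rw [hInt1, gen_union]
  -- second Mayer-Vietoris
  have hMV2 := hdim_union K (SC.gen {G | ∃ F ∈ F1 ∪ F2, G = insert (a+t) (V' \ F)})
    (SC.gen {G | ∃ F ∈ F1 ∪ F2, G = insert a (V' \ F)})
    (gen_closed _) (gen_closed _) N
    (gen_bound _ N (by
      rintro A ⟨F, hF, rfl⟩
      intro z hz
      rw [Finset.mem_range]
      rcases Finset.mem_insert.mp hz with rfl | h
      · omega
      · rcases hzV' z (Finset.mem_sdiff.mp h).1 with h' | h' <;> omega))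
    (gen_bound _ N (by
      rintro A ⟨F, hF, rfl⟩
      intro z hz
      rw [Finset.mem_range]
      rcases Finset.mem_insert.mp hz with rfl | h
      · omega
      · rcases hzV' z (Finset.mem_sdiff.mp h).1 with h' | h' <;> omega))
    (a+t) a
    (gen_cone _ (a+t) (by rintro A ⟨F, hF, rfl⟩; exact Finset.mem_insert_self _ _))
    (gen_cone _ a (by rintro A ⟨F, hF, rfl⟩; exact Finset.mem_insert_self _ _))
    (i - 1)
  rw [hMV2]
  -- identify second intersection with E''
  have hInt2 : SC.gen {G | ∃ F ∈ F1 ∪ F2, G = insert (a+t) (V' \ F)}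
      ∩ SC.gen {G | ∃ F ∈ F1 ∪ F2, G = insert a (V' \ F)}
      = SC.gen {G | ∃ F ∈ F1 ∪ F2, G = V' \ F} := by
    ext G
    constructor
    · rintro ⟨⟨A, ⟨F, hF, rfl⟩, hGA⟩, ⟨B, ⟨F', hF', rfl⟩, hGB⟩⟩
      refine ⟨V' \ F, ⟨F, hF, rfl⟩, ?_⟩
      intro z hz
      rcases Finset.mem_insert.mp (hGA hz) with rfl | h
      · exfalso
        rcases Finset.mem_insert.mp (hGB hz) with h' | h'
        · omega
        · have := hzV' _ (Finset.mem_sdiff.mp h').1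
          omega
      · exact h
    · rintro ⟨A, ⟨F, hF, rfl⟩, hGA⟩
      exact ⟨⟨insert (a+t) (V' \ F), ⟨F, hF, rfl⟩, hGA.trans (Finset.subset_insert _ _)⟩,
        ⟨insert a (V' \ F), ⟨F, hF, rfl⟩, hGA.trans (Finset.subset_insert _ _)⟩⟩
  rw [hInt2, show i - 1 - 1 = i - 2 from by ring]

end SRR

/-- Proposition 4.3(iii),(iv). For `E = E(s_1,…,s_r)` with `r ≥ 2`: if
`s_j = 2` then `H̃_i(E) ≅ H̃_{i-2}(E(s_1,…,ŝ_j,…,s_r))`, and if `s_j = 1` then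
`H̃_i(E) ≅ H̃_{i-1}(E(s_1,…,ŝ_j,…,s_r))`, for all `i` (over a field, recorded as equality
of dimensions). -/
theorem short_run_removal (K : Type) [Field K] (t : ℕ) (ht : 2 ≤ t) (L1 L2 : List ℕ)
    (hpos : ∀ x ∈ L1 ++ L2, 1 ≤ x) (hr : L1 ++ L2 ≠ []) :
    (∀ i : ℤ, SC.hdim K (EC t (L1 ++ 2 :: L2)) i = SC.hdim K (EC t (L1 ++ L2)) (i - 2)) ∧
    (∀ i : ℤ, SC.hdim K (EC t (L1 ++ 1 :: L2)) i = SC.hdim K (EC t (L1 ++ L2)) (i - 1)) := by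
  constructor
  · intro i
    rw [SRR.hdim_two K t ht L1 L2 hr i, SRR.hdim_Epp K t 2 ht L1 L2 (i - 2)]
  · intro i
    rw [SRR.hdim_one K t ht L1 L2 hr i, SRR.hdim_Epp K t 1 ht L1 L2 (i - 1)]
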